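/- arXiv:1207.0295 — 4 statements merged into one kernel-verified Lean document; each statement's English description precedes it below -/
import Mathlib

section
/- Let v > 0 and for E > 0 set D(E) = 2·cos(√E) + (v/√E)·sin(√E) (the trace of the one-step transfer matrix T(v,E)). Then for every integer l ≥ 1 there exists a constant c_l = c_l(v) with 0 < c_l < (πl)² − (π(l−1))² such that {E > 0 : |D(E)| ≤ 2} = ⋃_{l≥1} [(πl)² − c_l, (πl)²]. In particular, the right endpoints (πl)² of the bands do not depend on v. -/
open Matrix Real Filter MeasureTheory ProbabilityTheory

noncomputable section

/-- Principal branch of the complex square root. -/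
def csqrt (z : ℂ) : ℂ := z ^ (1/2 : ℂ)

/-- One-step transfer matrix of the random Kronig-Penney model at complex energy. -/
def TmatC (v : ℝ) (z : ℂ) : Matrix (Fin 2) (Fin 2) ℂ :=
  !![1, (v : ℂ); 0, 1] *
  !![Complex.cos (csqrt z), -(csqrt z) * Complex.sin (csqrt z);
     Complex.sin (csqrt z) / (csqrt z), Complex.cos (csqrt z)]

/-- One-step transfer matrix at positive real energy. -/
def TmatR (v E : ℝ) : Matrix (Fin 2) (Fin 2) ℝ :=
  !![1, v; 0, 1] *
  !![Real.cos (Real.sqrt E), -(Real.sqrt E) * Real.sin (Real.sqrt E);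
     Real.sin (Real.sqrt E) / Real.sqrt E, Real.cos (Real.sqrt E)]

/-- Euclidean norm of a vector in ℝ². -/
def vnormR (x : Fin 2 → ℝ) : ℝ := ‖(WithLp.equiv 2 (Fin 2 → ℝ)).symm x‖

/-- Euclidean norm of a vector in ℂ². -/
def vnormC (x : Fin 2 → ℂ) : ℝ := ‖(WithLp.equiv 2 (Fin 2 → ℂ)).symm x‖

/-- Operator norm of a real 2×2 matrix w.r.t. the Euclidean norm. -/
def opR (A : Matrix (Fin 2) (Fin 2) ℝ) : ℝ :=
  ‖LinearMap.toContinuousLinearMap (Matrix.toEuclideanLin A)‖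

/-- Operator norm of a complex 2×2 matrix w.r.t. the Euclidean norm. -/
def opC (A : Matrix (Fin 2) (Fin 2) ℂ) : ℝ :=
  ‖LinearMap.toContinuousLinearMap (Matrix.toEuclideanLin A)‖

/-- The unit vector with angle θ. -/
def eth (θ : ℝ) : Fin 2 → ℝ := ![Real.cos θ, Real.sin θ]

/-- The circle map S_A on [0, 2π) induced by an (invertible) matrix A. -/
def SMap (A : Matrix (Fin 2) (Fin 2) ℝ) (θ : ℝ) : ℝ :=
  toIcoMod Real.two_pi_pos 0
    (Complex.arg (Complex.mk ((A.mulVec (eth θ)) 0) ((A.mulVec (eth θ)) 1)))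

/-- critical energy -/
def El (l : ℕ) : ℝ := (Real.pi * l) ^ 2

/-- transfer matrix product T^E(n,m) = T(v_n) ⋯ T(v_{m+1}), real energy, ℕ indices. -/
def TprodR (v : ℕ → ℝ) (E : ℝ) (n m : ℕ) : Matrix (Fin 2) (Fin 2) ℝ :=
  ((List.range (n - m)).map fun k => TmatR (v (n - k)) E).prod

/-- transfer matrix product, complex energy, ℤ indices. -/
def TprodZC (v : ℤ → ℝ) (z : ℂ) (n m : ℤ) : Matrix (Fin 2) (Fin 2) ℂ :=
  ((List.range (n - m).toNat).map fun k => TmatC (v (n - k)) z).prod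

/-- The basis change matrix M^ε = M₂ · M₁. -/
def Meps (vb : ℝ) (l : ℕ) (ε : ℝ) : Matrix (Fin 2) (Fin 2) ℝ :=
  (let b : ℝ := (vb * El l / 2) ^ ((1 : ℝ)/4)
   !![1/(2*b), -b; 1/(2*b), b]) * !![Real.sqrt ε, 0; 0, 1]

/-- Rotation matrix by angle β. -/
def Rot (β : ℝ) : Matrix (Fin 2) (Fin 2) ℝ :=
  !![Real.cos β, -Real.sin β; Real.sin β, Real.cos β]

/-- Modified Prüfer phases. -/
def pruefer (vb : ℝ) (l : ℕ) (ε : ℝ) (v : ℕ → ℝ) (θ₀ : ℝ) : ℕ → ℝ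
  | 0 => θ₀
  | n + 1 =>
      SMap (Meps vb l ε * TmatR (v (n + 1)) (El l - ε) * (Meps vb l ε)⁻¹)
        (pruefer vb l ε v θ₀ n)


namespace KPaux

def psi (v x : ℝ) : ℝ := x + 2 * Real.arctan (2 * x / v)

lemma psi_mono (v : ℝ) (hv : 0 < v) : StrictMono (psi v) := by
  intro a b h
  unfold psi
  have h2 : Real.arctan (2 * a / v) < Real.arctan (2 * b / v) := by
    apply Real.arctan_strictMono
    apply div_lt_div_of_pos_right (by linarith) hv
  linarith

lemma psi_cont (v : ℝ) : Continuous (psi v) := by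
  unfold psi
  exact continuous_id.add (continuous_const.mul (Real.continuous_arctan.comp (by continuity)))

lemma sin_2arctan (t : ℝ) : Real.sin (2 * Real.arctan t) = 2*t/(1+t^2) := by
  have h1 : (0:ℝ) < 1 + t^2 := by positivity
  have hsq : Real.sqrt (1+t^2) * Real.sqrt (1+t^2) = 1 + t^2 := Real.mul_self_sqrt h1.le
  have hsne : Real.sqrt (1+t^2) ≠ 0 := by positivity
  rw [Real.sin_two_mul, Real.sin_arctan, Real.cos_arctan]
  field_simp
  rw [Real.sq_sqrt h1.le]

lemma cos_2arctan (t : ℝ) : Real.cos (2 * Real.arctan t) = (1 - t^2)/(1+t^2) := by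
  have h1 : (0:ℝ) < 1 + t^2 := by positivity
  have hsq : Real.sqrt (1+t^2) * Real.sqrt (1+t^2) = 1 + t^2 := Real.mul_self_sqrt h1.le
  have hsne : Real.sqrt (1+t^2) ≠ 0 := by positivity
  rw [Real.cos_two_mul, Real.cos_arctan]
  field_simp
  nlinarith [hsq]

lemma sin_psi (v : ℝ) (hv : 0 < v) (x : ℝ) :
    (v^2 + 4*x^2) * Real.sin (psi v x) = (v^2 - 4*x^2) * Real.sin x + 4*v*x * Real.cos x := by
  have hv' : v ≠ 0 := hv.ne'
  unfold psi
  rw [Real.sin_add, sin_2arctan, cos_2arctan]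
  have h2 : (1 : ℝ) + (2*x/v)^2 = (v^2 + 4*x^2)/v^2 := by field_simp; ring
  rw [h2]
  have h3 : v^2 + 4*x^2 ≠ 0 := by positivity
  field_simp
  ring

end KPaux

namespace KPaux


lemma band_iff (v : ℝ) (hv : 0 < v) {x : ℝ} (hx : 0 < x) :
    |2 * Real.cos x + (v / x) * Real.sin x| ≤ 2 ↔ Real.sin x * Real.sin (psi v x) ≤ 0 := by
  have hx' : x ≠ 0 := hx.ne'
  have hid : x^2 * ((2 * Real.cos x + (v / x) * Real.sin x)^2 - 4) =
      Real.sin x * ((v^2 - 4*x^2) * Real.sin x + 4*v*x * Real.cos x) := by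
    have hp := Real.sin_sq_add_cos_sq x
    field_simp
    nlinarith [hp]
  rw [← sin_psi v hv x] at hid
  have h3 : (0:ℝ) < v^2 + 4*x^2 := by positivity
  rw [mul_left_comm] at hid
  constructor
  · intro h
    rw [abs_le] at h
    have ha4 : (2 * Real.cos x + (v / x) * Real.sin x)^2 ≤ 4 := by nlinarith [h.1, h.2]
    have h5 : x^2 * ((2 * Real.cos x + (v / x) * Real.sin x)^2 - 4) ≤ 0 :=
      mul_nonpos_of_nonneg_of_nonpos (sq_nonneg x) (by linarith)
    rw [hid] at h5
    have h6 : (v^2 + 4*x^2) * (Real.sin x * Real.sin (psi v x)) ≤ (v^2 + 4*x^2) * 0 := by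
      simpa using h5
    exact le_of_mul_le_mul_left h6 h3
  · intro h
    have h5 : (v^2 + 4*x^2) * (Real.sin x * Real.sin (psi v x)) ≤ 0 :=
      mul_nonpos_iff.2 (Or.inl ⟨h3.le, h⟩)
    rw [← hid] at h5
    have hx2 : (0:ℝ) < x^2 := by positivity
    have h6 : (2 * Real.cos x + (v / x) * Real.sin x)^2 - 4 ≤ 0 := by
      by_contra hcon
      push_neg at hcon
      nlinarith
    rw [abs_le]
    constructor <;> nlinarith [sq_nonneg (2 * Real.cos x + (v / x) * Real.sin x - 2),
      sq_nonneg (2 * Real.cos x + (v / x) * Real.sin x + 2)]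

lemma exists_a (v : ℝ) (hv : 0 < v) (l : ℕ) :
    ∃ a : ℝ, 1 ≤ l → (π * ((l:ℝ) - 1) < a ∧ a < π * l ∧ psi v a = π * l) := by
  rcases Nat.eq_zero_or_pos l with h0 | hl
  · exact ⟨0, by omega⟩
  have hl1 : (1:ℝ) ≤ (l:ℝ) := by exact_mod_cast hl
  have hpi := Real.pi_pos
  have hle : π * ((l:ℝ) - 1) ≤ π * l := by nlinarith
  have h1 : psi v (π * ((l:ℝ) - 1)) < π * l := by
    unfold psi
    have := Real.arctan_lt_pi_div_two (2 * (π * ((l:ℝ) - 1)) / v)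
    nlinarith
  have h2 : π * (l:ℝ) < psi v (π * l) := by
    unfold psi
    have h0 : (0:ℝ) < Real.arctan (2 * (π * l) / v) := by
      rw [← Real.arctan_zero]
      apply Real.arctan_strictMono
      positivity
    linarith
  have hmem : (π * (l:ℝ)) ∈ Set.Ioo (psi v (π * ((l:ℝ) - 1))) (psi v (π * l)) := ⟨h1, h2⟩
  obtain ⟨a, ha, hea⟩ := intermediate_value_Ioo hle (psi_cont v).continuousOn hmem
  exact ⟨a, fun _ => ⟨ha.1, ha.2, hea⟩⟩

lemma psi_gt (v : ℝ) (hv : 0 < v) {x : ℝ} (hx : 0 < x) : x < psi v x := by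
  unfold psi
  have h0 : (0:ℝ) < Real.arctan (2 * x / v) := by
    rw [← Real.arctan_zero]
    exact Real.arctan_strictMono (by positivity)
  linarith

lemma psi_lt (v : ℝ) (x : ℝ) : psi v x < x + π := by
  unfold psi
  have := Real.arctan_lt_pi_div_two (2 * x / v)
  linarith

lemma band_char (v : ℝ) (hv : 0 < v) (l : ℕ) (hl : 1 ≤ l) (a : ℝ)
    (ha1 : π * ((l:ℝ) - 1) < a) (ha2 : a < π * l) (ha3 : psi v a = π * l)
    {x : ℝ} (hx1 : π * ((l:ℝ) - 1) < x) (hx2 : x ≤ π * l) :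
    Real.sin x * Real.sin (psi v x) ≤ 0 ↔ a ≤ x := by
  have hpi := Real.pi_pos
  have hl1 : (1:ℝ) ≤ (l:ℝ) := by exact_mod_cast hl
  have hx0 : 0 < x := by nlinarith
  rcases eq_or_lt_of_le hx2 with heq | hlt
  · subst heq
    have hs0 : Real.sin (π * l) = 0 := by rw [mul_comm]; exact Real.sin_nat_mul_pi l
    simp only [hs0, zero_mul]
    constructor
    · intro _; linarith
    · intro _; exact le_refl 0
  · set n : ℤ := (l:ℤ) - 1 with hn
    have hnπ : ((n:ℝ)) * π = π * ((l:ℝ) - 1) := by push_cast [hn]; ring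
    have hnl : ((n:ℝ)) * π + π = π * l := by push_cast [hn]; ring
    have hshift : ∀ z : ℝ, Real.sin z = (-1)^n * Real.sin (z - n * π) := by
      intro z
      have h := Real.sin_add_int_mul_pi (z - n * π) n
      rw [show z - ↑n * π + ↑n * π = z by ring] at h
      exact h
    have hy0 : 0 < x - n * π := by rw [hnπ]; linarith
    have hyπ : x - n * π < π := by rw [hnπ]; linarith
    have hu0 : 0 < psi v x - n * π := by
      have := psi_gt v hv hx0
      rw [hnπ]; linarith
    have hu2 : psi v x - n * π < 2 * π := by
      have := psi_lt v x
      linarith [hnl ▸ (by linarith : x + π ≤ π * l + π)]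
    have hsy : 0 < Real.sin (x - n * π) := Real.sin_pos_of_pos_of_lt_pi hy0 hyπ
    have hone : ((-1:ℝ))^n * ((-1:ℝ))^n = 1 := by
      rw [← zpow_add₀ (by norm_num : (-1:ℝ) ≠ 0)]
      exact Even.neg_one_zpow ⟨n, rfl⟩
    have hprod : Real.sin x * Real.sin (psi v x) =
        Real.sin (x - n * π) * Real.sin (psi v x - n * π) := by
      rw [hshift x, hshift (psi v x)]
      calc (-1:ℝ)^n * Real.sin (x - ↑n * π) * ((-1:ℝ)^n * Real.sin (psi v x - ↑n * π))
          = ((-1:ℝ)^n * (-1:ℝ)^n) * (Real.sin (x - ↑n * π) * Real.sin (psi v x - ↑n * π)) := by ring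
        _ = _ := by rw [hone, one_mul]
    rw [hprod]
    constructor
    · intro h
      have hsu : Real.sin (psi v x - n * π) ≤ 0 := by
        by_contra hcon
        push_neg at hcon
        nlinarith
      have hge : π ≤ psi v x - n * π := by
        by_contra hcon
        push_neg at hcon
        exact absurd (Real.sin_pos_of_pos_of_lt_pi hu0 hcon) (not_lt.2 hsu)
      have : π * l ≤ psi v x := by linarith [hnl]
      rw [← ha3] at this
      exact ((psi_mono v hv).le_iff_le).1 this
    · intro h
      have hpsi : π * (l:ℝ) ≤ psi v x := ha3 ▸ (psi_mono v hv).le_iff_le.2 h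
      have hge : π ≤ psi v x - n * π := by linarith [hnl]
      have hsu : Real.sin (psi v x - n * π) ≤ 0 := by
        have h1 : Real.sin ((psi v x - n * π - π) + π) = -Real.sin (psi v x - n * π - π) := by
          rw [Real.sin_add_pi]
        rw [show psi v x - ↑n * π - π + π = psi v x - ↑n * π by ring] at h1
        rw [h1]
        have : 0 ≤ Real.sin (psi v x - ↑n * π - π) :=
          Real.sin_nonneg_of_nonneg_of_le_pi (by linarith) (by linarith)
        linarith
      exact mul_nonpos_iff.2 (Or.inl ⟨hsy.le, hsu⟩)

end KPaux

/-- band structure of the periodic Kronig-Penney model. -/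
theorem stmt2 (v : ℝ) (hv : 0 < v) :
    ∃ c : ℕ → ℝ,
      (∀ l : ℕ, 1 ≤ l →
        0 < c l ∧ c l < (π * l) ^ 2 - (π * ((l : ℝ) - 1)) ^ 2) ∧
      {E : ℝ | 0 < E ∧
          |2 * Real.cos (Real.sqrt E) + (v / Real.sqrt E) * Real.sin (Real.sqrt E)| ≤ 2}
        = ⋃ (l : ℕ) (_ : 1 ≤ l), Set.Icc ((π * l) ^ 2 - c l) ((π * l) ^ 2) := by
  choose a ha using KPaux.exists_a v hv
  have band_iff : ∀ {x : ℝ}, 0 < x →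
      (|2 * Real.cos x + (v / x) * Real.sin x| ≤ 2 ↔
        Real.sin x * Real.sin (KPaux.psi v x) ≤ 0) := fun hx => KPaux.band_iff v hv hx
  have band_char : ∀ (l : ℕ), 1 ≤ l → ∀ {x : ℝ}, π * ((l:ℝ) - 1) < x → x ≤ π * l →
      (Real.sin x * Real.sin (KPaux.psi v x) ≤ 0 ↔ a l ≤ x) :=
    fun l hl {x} hx1 hx2 =>
      KPaux.band_char v hv l hl (a l) (ha l hl).1 (ha l hl).2.1 (ha l hl).2.2 hx1 hx2

  have hpi := Real.pi_pos
  refine ⟨fun l => (π * l)^2 - (a l)^2, ?_, ?_⟩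
  · intro l hl
    obtain ⟨h1, h2, _⟩ := ha l hl
    have hl1 : (1:ℝ) ≤ (l:ℝ) := by exact_mod_cast hl
    have h0 : 0 ≤ π * ((l:ℝ)-1) := by nlinarith
    constructor
    · show 0 < (π * l)^2 - (a l)^2
      nlinarith
    · show (π * l)^2 - (a l)^2 < (π * l) ^ 2 - (π * ((l : ℝ) - 1)) ^ 2
      nlinarith
  · ext E
    simp only [Set.mem_setOf_eq, Set.mem_iUnion, Set.mem_Icc]
    constructor
    · rintro ⟨hE, hband⟩
      have hx0 : 0 < Real.sqrt E := Real.sqrt_pos.2 hE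
      set x := Real.sqrt E with hxdef
      have hxE : x^2 = E := Real.sq_sqrt hE.le
      set l : ℕ := ⌈x / π⌉₊ with hldef
      have hl : 1 ≤ l := by
        rw [hldef]
        rw [Nat.one_le_iff_ne_zero, ne_eq, Nat.ceil_eq_zero, not_le]
        positivity
      have hx2 : x ≤ π * l := by
        have h := Nat.le_ceil (x / π)
        rw [div_le_iff₀ hpi] at h
        rw [hldef]; linarith
      have hx1 : π * ((l:ℝ) - 1) < x := by
        have h := Nat.ceil_lt_add_one (by positivity : (0:ℝ) ≤ x / π)
        have h2 : ((l:ℝ) - 1) < x / π := by rw [hldef]; linarith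
        have := (mul_lt_mul_of_pos_left h2 hpi)
        rw [mul_div_cancel₀ _ hpi.ne'] at this
        linarith
      obtain ⟨ha1, ha2, ha3⟩ := ha l hl
      have hax : a l ≤ x := (band_char l hl hx1 hx2).1 ((band_iff hx0).1 hband)
      have hl1 : (1:ℝ) ≤ (l:ℝ) := by exact_mod_cast hl
      have ha0 : 0 ≤ a l := by nlinarith
      refine ⟨l, hl, ?_, ?_⟩
      · show (π * l)^2 - ((π * l)^2 - (a l)^2) ≤ E
        nlinarith
      · show E ≤ (π * l)^2
        nlinarith
    · rintro ⟨l, hl, h1, h2⟩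
      obtain ⟨ha1, ha2, ha3⟩ := ha l hl
      have h1' : (π * l)^2 - ((π * l)^2 - (a l)^2) ≤ E := h1
      have h2' : E ≤ (π * l)^2 := h2
      have hl1 : (1:ℝ) ≤ (l:ℝ) := by exact_mod_cast hl
      have ha0 : 0 < a l := by nlinarith
      have hE1 : (a l)^2 ≤ E := by nlinarith
      have hE : 0 < E := by nlinarith
      have hx0 : 0 < Real.sqrt E := Real.sqrt_pos.2 hE
      have hxE : (Real.sqrt E)^2 = E := Real.sq_sqrt hE.le
      have hxa : a l ≤ Real.sqrt E := by
        have := Real.sqrt_le_sqrt hE1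
        rwa [Real.sqrt_sq ha0.le] at this
      have hx2 : Real.sqrt E ≤ π * l := by
        have h3 : E ≤ (π * l)^2 := h2'
        have := Real.sqrt_le_sqrt h3
        rwa [Real.sqrt_sq (by positivity)] at this
      have hx1 : π * ((l:ℝ) - 1) < Real.sqrt E := lt_of_lt_of_le ha1 hxa
      exact ⟨hE, (band_iff hx0).2 ((band_char l hl hx1 hx2).2 hxa)⟩


end
end

section
/- Let N ≥ 1 be an integer, let A_1,…,A_N and R_1,…,R_N be complex 2×2 matrices, and let κ ∈ ℂ. Set B_n = A_n + κ·R_n for each n, let c₁ = max over all 0 ≤ m ≤ n ≤ N of ‖A_n·A_{n−1}⋯A_{m+1}‖ (empty products being the identity), and let c₂ = max_{1≤n≤N} ‖R_n‖. If |κ|·c₁·c₂·N < 1, then max over all 0 ≤ m ≤ n ≤ N of ‖B_n·B_{n−1}⋯B_{m+1}‖ ≤ c₁/(1 − |κ|·c₁·c₂·N). -/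
open Matrix Real Filter MeasureTheory ProbabilityTheory

noncomputable section

/-- Product A_n · A_{n-1} ⋯ A_{m+1} of a sequence of 2×2 complex matrices. -/
def matProd (A : ℕ → Matrix (Fin 2) (Fin 2) ℂ) (n m : ℕ) : Matrix (Fin 2) (Fin 2) ℂ :=
  ((List.range (n - m)).map fun k => A (n - k)).prod


lemma opC_eq_clm (A : Matrix (Fin 2) (Fin 2) ℂ) :
    opC A = ‖Matrix.toEuclideanCLM (𝕜 := ℂ) A‖ := by
  unfold opC; congr 1

lemma opC_nonneg (A : Matrix (Fin 2) (Fin 2) ℂ) : 0 ≤ opC A := by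
  rw [opC_eq_clm]; exact norm_nonneg _

lemma opC_add_le (A B : Matrix (Fin 2) (Fin 2) ℂ) : opC (A + B) ≤ opC A + opC B := by
  simp only [opC_eq_clm, map_add]; exact norm_add_le _ _

lemma opC_mul_le (A B : Matrix (Fin 2) (Fin 2) ℂ) : opC (A * B) ≤ opC A * opC B := by
  simp only [opC_eq_clm, _root_.map_mul]; exact norm_mul_le _ _

set_option synthInstance.maxHeartbeats 1000000 in
lemma opC_smul (κ : ℂ) (A : Matrix (Fin 2) (Fin 2) ℂ) :
    opC (κ • A) = ‖κ‖ * opC A := by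
  simp only [opC_eq_clm, _root_.map_smul]
  rw [norm_smul κ (Matrix.toEuclideanCLM (𝕜 := ℂ) A)]

lemma matProd_self (A : ℕ → Matrix (Fin 2) (Fin 2) ℂ) (m : ℕ) : matProd A m m = 1 := by
  simp [matProd]

lemma matProd_succ (A : ℕ → Matrix (Fin 2) (Fin 2) ℂ) (n m : ℕ) (h : m ≤ n) :
    matProd A (n + 1) m = A (n + 1) * matProd A n m := by
  unfold matProd
  have h1 : n + 1 - m = (n - m) + 1 := by omega
  rw [h1, List.range_succ_eq_map, List.map_cons, List.prod_cons, List.map_map]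
  simp only [Nat.sub_zero]
  have hfun : ((fun k => A (n + 1 - k)) ∘ Nat.succ) = fun k => A (n - k) := by
    funext k
    simp only [Function.comp_apply, Nat.succ_sub_succ]
  rw [hfun]

lemma matProd_telescope (A R : ℕ → Matrix (Fin 2) (Fin 2) ℂ) (κ : ℂ) (m : ℕ) :
    ∀ n, m ≤ n →
      matProd (fun j => A j + κ • R j) n m
        = matProd A n m + ∑ j ∈ Finset.Ico m n,
            matProd A n (j + 1) * (κ • R (j + 1)) * matProd (fun j => A j + κ • R j) j m := by
  intro n
  induction n with
  | zero =>
    intro h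
    have : m = 0 := Nat.le_zero.mp h
    subst this
    simp [matProd_self]
  | succ n ih =>
    intro h
    rcases Nat.eq_or_lt_of_le h with h' | h'
    · rw [← h']
      simp [matProd_self]
    · have hmn : m ≤ n := by omega
      set B := fun j => A j + κ • R j with hB
      have hA1 : matProd A (n + 1) (n + 1) = 1 := matProd_self A (n + 1)
      have key : ∀ j ∈ Finset.Ico m n,
          A (n + 1) * (matProd A n (j + 1) * (κ • R (j + 1)) * matProd B j m)
            = matProd A (n + 1) (j + 1) * (κ • R (j + 1)) * matProd B j m := by
        intro j hj
        have hj' : j + 1 ≤ n := by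
          simp only [Finset.mem_Ico] at hj; omega
        rw [matProd_succ A n (j + 1) hj']
        simp only [mul_assoc]
      have hBn1 : B (n + 1) = A (n + 1) + κ • R (n + 1) := rfl
      have h2 : A (n + 1) * matProd B n m
          = matProd A (n + 1) m + ∑ j ∈ Finset.Ico m n,
              matProd A (n + 1) (j + 1) * (κ • R (j + 1)) * matProd B j m := by
        rw [ih hmn, mul_add, Finset.mul_sum, matProd_succ A n m hmn]
        exact congrArg _ (Finset.sum_congr rfl key)
      rw [matProd_succ B n m hmn, hBn1, add_mul, h2, Finset.sum_Ico_succ_top hmn, hA1,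
        one_mul, add_assoc]

theorem stmt3aux (N : ℕ) (hN : 1 ≤ N) (A R : ℕ → Matrix (Fin 2) (Fin 2) ℂ) (κ : ℂ)
    (c₁ c₂ : ℝ)
    (hc1 : ∀ m n : ℕ, m ≤ n → n ≤ N → opC (matProd A n m) ≤ c₁)
    (hc2 : ∀ n : ℕ, 1 ≤ n → n ≤ N → opC (R n) ≤ c₂)
    (hsmall : ‖κ‖ * c₁ * c₂ * N < 1) :
    ∀ n m : ℕ, m ≤ n → n ≤ N →
      opC (matProd (fun j => A j + κ • R j) n m)
        ≤ c₁ / (1 - ‖κ‖ * c₁ * c₂ * N) := by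
  set x := ‖κ‖ * c₁ * c₂ * N with hx
  have hx1 : 1 - x > 0 := by linarith
  set C := c₁ / (1 - x) with hC
  have hc1nn : 0 ≤ c₁ := le_trans (opC_nonneg _) (hc1 0 0 le_rfl (by omega))
  have hc2nn : 0 ≤ c₂ := le_trans (opC_nonneg _) (hc2 1 le_rfl hN)
  have hCnn : 0 ≤ C := div_nonneg hc1nn (le_of_lt hx1)
  have hxnn : 0 ≤ x := by
    have := norm_nonneg κ
    positivity
  set B := fun j => A j + κ • R j with hB
  intro n
  induction n using Nat.strong_induction_on with
  | _ n ih =>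
    intro m hmn hnN
    rw [matProd_telescope A R κ m n hmn]
    have step1 : opC (matProd A n m + ∑ j ∈ Finset.Ico m n,
            matProd A n (j + 1) * (κ • R (j + 1)) * matProd B j m)
        ≤ c₁ + ∑ j ∈ Finset.Ico m n, c₁ * (‖κ‖ * c₂) * C := by
      refine le_trans (opC_add_le _ _) (add_le_add (hc1 m n hmn hnN) ?_)
      calc opC (∑ j ∈ Finset.Ico m n,
              matProd A n (j + 1) * (κ • R (j + 1)) * matProd B j m)
          ≤ ∑ j ∈ Finset.Ico m n,
              opC (matProd A n (j + 1) * (κ • R (j + 1)) * matProd B j m) := by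
            simp only [opC_eq_clm, map_sum]
            exact norm_sum_le _ _
        _ ≤ ∑ j ∈ Finset.Ico m n, c₁ * (‖κ‖ * c₂) * C := by
            refine Finset.sum_le_sum ?_
            intro j hj
            simp only [Finset.mem_Ico] at hj
            have h1 : opC (matProd A n (j + 1)) ≤ c₁ := hc1 (j + 1) n (by omega) hnN
            have h2 : opC (κ • R (j + 1)) ≤ ‖κ‖ * c₂ := by
              rw [opC_smul]
              exact mul_le_mul_of_nonneg_left (hc2 (j + 1) (by omega) (by omega))
                (norm_nonneg κ)
            have h3 : opC (matProd B j m) ≤ C := ih j (by omega) m (by omega) (by omega)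
            calc opC (matProd A n (j + 1) * (κ • R (j + 1)) * matProd B j m)
                ≤ opC (matProd A n (j + 1) * (κ • R (j + 1))) * opC (matProd B j m) :=
                  opC_mul_le _ _
              _ ≤ opC (matProd A n (j + 1)) * opC (κ • R (j + 1)) * opC (matProd B j m) := by
                  refine mul_le_mul_of_nonneg_right (opC_mul_le _ _) (opC_nonneg _)
              _ ≤ c₁ * (‖κ‖ * c₂) * C := by
                  refine mul_le_mul ?_ h3 (opC_nonneg _) (by positivity)
                  exact mul_le_mul h1 h2 (opC_nonneg _) hc1nn
    refine le_trans step1 ?_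
    rw [Finset.sum_const, Nat.card_Ico, nsmul_eq_mul]
    have hcard : ((n - m : ℕ) : ℝ) ≤ (N : ℝ) := by
      exact_mod_cast le_trans (Nat.sub_le n m) hnN
    have h4 : ((n - m : ℕ) : ℝ) * (c₁ * (‖κ‖ * c₂) * C) ≤ x * C := by
      have : ((n - m : ℕ) : ℝ) * (c₁ * (‖κ‖ * c₂) * C)
          ≤ (N : ℝ) * (c₁ * (‖κ‖ * c₂) * C) := by
        refine mul_le_mul_of_nonneg_right hcard (by positivity)
      refine le_trans this (le_of_eq ?_)
      rw [hx]; ring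
    have h5 : c₁ + x * C = C := by
      rw [hC]
      field_simp
      ring
    linarith

/-- perturbation bound for products of matrices. -/
theorem stmt3 (N : ℕ) (hN : 1 ≤ N) (A R : ℕ → Matrix (Fin 2) (Fin 2) ℂ) (κ : ℂ)
    (c₁ c₂ : ℝ)
    (hc1 : ∀ m n : ℕ, m ≤ n → n ≤ N → opC (matProd A n m) ≤ c₁)
    (hc2 : ∀ n : ℕ, 1 ≤ n → n ≤ N → opC (R n) ≤ c₂)
    (hsmall : ‖κ‖ * c₁ * c₂ * N < 1) :
    ∀ m n : ℕ, m ≤ n → n ≤ N →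
      opC (matProd (fun j => A j + κ • R j) n m)
        ≤ c₁ / (1 - ‖κ‖ * c₁ * c₂ * N) := by
  intro m n hmn hnN
  exact stmt3aux N hN A R κ c₁ c₂ hc1 hc2 hsmall n m hmn hnN

end
end

section
/- Let l ≥ 1 be an even integer, E_l = (πl)², and let K ⊂ ℝ be compact. There exist ε₀ > 0 and a constant C such that for all v ∈ K and all 0 < ε ≤ ε₀: ‖T(v, E_l − ε) − [[1, v],[0, 1]]·(I + ε·[[0, 1/2],[−1/(2E_l), 0]])‖ ≤ C·ε². -/
open Matrix Real Filter MeasureTheory ProbabilityTheory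

noncomputable section

lemma opR_le_entries (A : Matrix (Fin 2) (Fin 2) ℝ) :
    opR A ≤ |A 0 0| + |A 0 1| + |A 1 0| + |A 1 1| := by
  rw [opR]
  refine ContinuousLinearMap.opNorm_le_bound _ (by positivity) (fun x => ?_)
  have hx : ∀ j, |x j| ≤ ‖x‖ := by
    intro j
    rw [EuclideanSpace.norm_eq]
    rw [show |x j| = Real.sqrt (|x j|^2) by rw [Real.sqrt_sq (abs_nonneg _)]]
    apply Real.sqrt_le_sqrt
    rw [Fin.sum_univ_two, sq_abs]
    fin_cases j <;> simp <;> nlinarith [sq_nonneg (x 0), sq_nonneg (x 1)]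
  have happ : ‖(LinearMap.toContinuousLinearMap (Matrix.toEuclideanLin A)) x‖
      = Real.sqrt (‖(A *ᵥ x) 0‖^2 + ‖(A *ᵥ x) 1‖^2) := by
    rw [show ((LinearMap.toContinuousLinearMap (Matrix.toEuclideanLin A)) x : EuclideanSpace ℝ (Fin 2))
      = Matrix.toEuclideanLin A x from rfl, EuclideanSpace.norm_eq, Fin.sum_univ_two]
    rfl
  rw [happ]
  have h0 : |((A *ᵥ x) 0 : ℝ)| ≤ (|A 0 0| + |A 0 1|) * ‖x‖ := by
    rw [show ((A *ᵥ x) 0 : ℝ) = A 0 0 * x 0 + A 0 1 * x 1 by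
      simp [Matrix.mulVec, dotProduct, Fin.sum_univ_two]]
    calc |A 0 0 * x 0 + A 0 1 * x 1| ≤ |A 0 0| * |x 0| + |A 0 1| * |x 1| := by
          refine (abs_add_le _ _).trans ?_; rw [abs_mul, abs_mul]
      _ ≤ (|A 0 0| + |A 0 1|) * ‖x‖ := by
          have := hx 0; have := hx 1
          nlinarith [abs_nonneg (A 0 0), abs_nonneg (A 0 1), abs_nonneg (x 0), abs_nonneg (x 1)]
  have h1 : |((A *ᵥ x) 1 : ℝ)| ≤ (|A 1 0| + |A 1 1|) * ‖x‖ := by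
    rw [show ((A *ᵥ x) 1 : ℝ) = A 1 0 * x 0 + A 1 1 * x 1 by
      simp [Matrix.mulVec, dotProduct, Fin.sum_univ_two]]
    calc |A 1 0 * x 0 + A 1 1 * x 1| ≤ |A 1 0| * |x 0| + |A 1 1| * |x 1| := by
          refine (abs_add_le _ _).trans ?_; rw [abs_mul, abs_mul]
      _ ≤ (|A 1 0| + |A 1 1|) * ‖x‖ := by
          have := hx 0; have := hx 1
          nlinarith [abs_nonneg (A 1 0), abs_nonneg (A 1 1), abs_nonneg (x 0), abs_nonneg (x 1)]
  have hsqrt : Real.sqrt (‖(A *ᵥ x) 0‖^2 + ‖(A *ᵥ x) 1‖^2) ≤ |((A *ᵥ x) 0 : ℝ)| + |((A *ᵥ x) 1 : ℝ)| := by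
    rw [show ‖(A *ᵥ x) 0‖ = |((A *ᵥ x) 0 : ℝ)| from rfl, show ‖(A *ᵥ x) 1‖ = |((A *ᵥ x) 1 : ℝ)| from rfl]
    rw [show |((A *ᵥ x) 0 : ℝ)| + |((A *ᵥ x) 1 : ℝ)|
      = Real.sqrt ((|((A *ᵥ x) 0 : ℝ)| + |((A *ᵥ x) 1 : ℝ)|)^2) by
        rw [Real.sqrt_sq (by positivity)]]
    apply Real.sqrt_le_sqrt
    nlinarith [abs_nonneg ((A *ᵥ x) 0 : ℝ), abs_nonneg ((A *ᵥ x) 1 : ℝ), sq_abs ((A *ᵥ x) 0 : ℝ), sq_abs ((A *ᵥ x) 1 : ℝ)]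
  calc _ ≤ |((A *ᵥ x) 0 : ℝ)| + |((A *ᵥ x) 1 : ℝ)| := hsqrt
    _ ≤ (|A 0 0| + |A 0 1|) * ‖x‖ + (|A 1 0| + |A 1 1|) * ‖x‖ := add_le_add h0 h1
    _ = (|A 0 0| + |A 0 1| + |A 1 0| + |A 1 1|) * ‖x‖ := by ring

set_option maxHeartbeats 1000000 in
lemma core (p s δ t ε : ℝ) (hp1 : 1 ≤ p) (hs0 : 0 < s) (hsp : s < p) (hsh : p/2 ≤ s)
    (hδd : δ = p - s) (hδε : δ * (p + s) = ε) (hδ1 : δ ≤ 1) (hε1 : ε ≤ 1) (hε : 0 < ε)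
    (ht_le : t ≤ δ) (ht_ge : δ - δ^3/4 ≤ t) :
    |s * t - ε/2| ≤ (p/4 + 1/2) * ε^2 ∧
    |ε * s - 2 * p^2 * t| ≤ 4 * ε^2 * (2 * p^2 * s) := by
  have hδ0 : 0 < δ := by rw [hδd]; linarith
  have hδe : δ ≤ ε := by nlinarith
  have hδ2ε : δ^2 ≤ ε^2 := by nlinarith
  have hδ3ε : δ^3 ≤ ε^2 := by nlinarith
  have hs12 : 1/2 ≤ s := by linarith
  have hεp0 : 0 < ε^2 := by positivity
  have hp2 : (0:ℝ) < p^2 := by positivity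
  have hdt0 : 0 ≤ δ - t := by linarith
  have hdt : δ - t ≤ δ^3/4 := by linarith
  have hpe : (0:ℝ) ≤ p*ε^2 := by positivity
  have hss : p^2*(1/2) ≤ p^2*s := mul_le_mul_of_nonneg_left hs12 hp2.le
  have hpp : p ≤ p^2 := by nlinarith [mul_le_mul_of_nonneg_left hp1 (show (0:ℝ) ≤ p by linarith)]
  constructor
  · have e : s * t - ε/2 = s * (t - δ) - δ^2/2 := by rw [hδd] at hδε ⊢; nlinarith
    rw [e, abs_le]
    have h1 : s * (δ - t) ≤ p * (δ^3/4) :=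
      mul_le_mul hsp.le hdt (by linarith) (by linarith)
    have h2 : 0 ≤ s * (δ - t) := mul_nonneg hs0.le hdt0
    have h3 : p * δ^3 ≤ p * ε^2 := mul_le_mul_of_nonneg_left hδ3ε (by linarith)
    constructor <;> linarith [sq_nonneg δ]
  · have hid : ε * s - 2 * p^2 * t = -(δ^2*(2*p+s)) + 2*p^2*(δ - t) := by
      rw [← hδε, hδd]; ring
    rw [hid, abs_le]
    have h1 : 2*p^2*(δ - t) ≤ 2*p^2*(δ^3/4) :=
      mul_le_mul_of_nonneg_left hdt (by positivity)
    have h1' : 0 ≤ 2*p^2*(δ - t) := mul_nonneg (by positivity) hdt0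
    have h2 : p^2 * δ^3 ≤ p^2 * ε^2 := mul_le_mul_of_nonneg_left hδ3ε (by positivity)
    have h3 : p^2/2*ε^2 ≤ 8*(p^2*s)*ε^2 :=
      mul_le_mul_of_nonneg_right (by linarith) hεp0.le
    have h4 : 0 ≤ δ^2*(2*p+s) := by positivity
    have h5 : δ^2*(2*p+s) ≤ 3*p*δ^2 := by
      have h' : δ^2*(s-p) ≤ 0 := mul_nonpos_of_nonneg_of_nonpos (sq_nonneg δ) (by linarith)
      nlinarith [h']
    have h6 : 3*p*δ^2 ≤ 3*p*ε^2 := mul_le_mul_of_nonneg_left hδ2ε (by linarith)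
    have h7 : 3*p*ε^2 ≤ 8*(p^2*s)*ε^2 :=
      mul_le_mul_of_nonneg_right (by linarith) hεp0.le
    constructor <;> linarith [sq_nonneg δ]

lemma pre (p ε s : ℝ) (hp1 : 1 ≤ p) (hε : 0 < ε) (hε2 : ε ≤ p^2/2)
    (hs0 : 0 < s) (hs2 : s^2 = p^2 - ε) :
    s < p ∧ p/2 ≤ s ∧ (p - s) * (p + s) = ε ∧ p - s ≤ ε := by
  have h1 : s < p := by nlinarith
  have h2 : p/2 ≤ s := by nlinarith
  have h3 : (p - s) * (p + s) = ε := by nlinarith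
  exact ⟨h1, h2, h3, by nlinarith⟩

lemma cosbound (δ ε : ℝ) (h0 : 0 ≤ δ) (hδe : δ ≤ ε) (hε1 : ε ≤ 1) :
    |Real.cos δ - 1| ≤ ε^2 := by
  have hu : Real.cos δ - 1 ≤ ε^2 := by nlinarith [Real.cos_le_one δ]
  have hlo : -(ε^2) ≤ Real.cos δ - 1 := by
    nlinarith [Real.one_sub_sq_div_two_le_cos (x := δ)]
  exact abs_le.2 ⟨hlo, hu⟩



set_option maxHeartbeats 1000000 in
/-- first-order expansion of the transfer matrix below the critical energy. -/
theorem stmt4 (l : ℕ) (hl : 1 ≤ l) (hleven : Even l) (K : Set ℝ) (hK : IsCompact K) :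
    ∃ ε₀ > (0:ℝ), ∃ C : ℝ, ∀ v ∈ K, ∀ ε : ℝ, 0 < ε → ε ≤ ε₀ →
      opR (TmatR v (El l - ε) -
          !![1, v; 0, 1] * (1 + ε • !![0, 1/2; -(1/(2 * El l)), 0]))
        ≤ C * ε ^ 2 := by
  obtain ⟨R, hR⟩ := hK.exists_bound_of_continuousOn continuousOn_id
  set p : ℝ := Real.pi * l with hp_def
  have hl1 : (1:ℝ) ≤ (l:ℝ) := by exact_mod_cast hl
  have hp1 : (1:ℝ) ≤ p := by
    rw [hp_def]
    nlinarith [Real.pi_gt_three]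
  have hp0 : (0:ℝ) < p := by linarith
  have hE : El l = p^2 := rfl
  have hE0 : 0 < El l := by rw [hE]; positivity
  refine ⟨min 1 (El l / 2), lt_min one_pos (by linarith), (1 + R) * (p + 7),
    fun v hv ε hε hε' => ?_⟩
  have hε1 : ε ≤ 1 := le_trans hε' (min_le_left _ _)
  have hε2 : ε ≤ El l / 2 := le_trans hε' (min_le_right _ _)
  have hvR : |v| ≤ R := by simpa using hR v hv
  have hEε : 0 < El l - ε := by linarith
  set s : ℝ := Real.sqrt (El l - ε) with hs_def
  have hs0 : 0 < s := Real.sqrt_pos.2 hEε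
  have hs2 : s^2 = p^2 - ε := by rw [hs_def, Real.sq_sqrt hEε.le, hE]
  obtain ⟨hsp, hsh, hδε, hδe⟩ := pre p ε s hp1 hε (by rw [hE] at hε2; linarith) hs0 hs2
  set δ : ℝ := p - s with hδ_def
  have hδ0 : 0 < δ := by rw [hδ_def]; linarith
  have hδ1 : δ ≤ 1 := le_trans hδe hε1
  obtain ⟨m, hm⟩ := hleven
  have hcosp : Real.cos p = 1 := by
    rw [hp_def, hm, show (Real.pi * ((m + m : ℕ) : ℝ) : ℝ) = (m:ℝ) * (2 * Real.pi) by
      push_cast; ring]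
    exact Real.cos_nat_mul_two_pi m
  have hsinp : Real.sin p = 0 := by
    rw [hp_def, show Real.pi * (l:ℝ) = (l:ℝ) * Real.pi by ring]
    exact Real.sin_nat_mul_pi l
  have hcoss : Real.cos s = Real.cos δ := by
    rw [show s = p - δ by rw [hδ_def]; ring, Real.cos_sub, hcosp, hsinp]; ring
  have hsins : Real.sin s = -Real.sin δ := by
    rw [show s = p - δ by rw [hδ_def]; ring, Real.sin_sub, hcosp, hsinp]; ring
  set t : ℝ := Real.sin δ with ht_def
  have ht_le : t ≤ δ := Real.sin_le hδ0.le
  have ht_ge : δ - δ^3/4 ≤ t := by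
    have := Real.sin_gt_sub_cube hδ0; have : 0 ≤ δ^3 := by positivity
    linarith
  obtain ⟨hc2, hc3⟩ := core p s δ t ε hp1 hs0 hsp hsh hδ_def hδε hδ1 hε1 hε ht_le ht_ge
  have hεp0 : (0:ℝ) < ε^2 := by positivity
  have hf1 : |Real.cos s - 1| ≤ ε^2 := by
    rw [hcoss]; exact cosbound δ ε hδ0.le hδe hε1
  have hf2 : |(-s) * Real.sin s - ε/2| ≤ (p/4 + 1/2) * ε^2 := by
    rw [hsins, show (-s) * -t = s * t by ring]; exact hc2
  have hf3 : |Real.sin s / s + ε/(2 * El l)| ≤ 4 * ε^2 := by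
    rw [hsins, hE]
    have hnum : -t/s + ε/(2*p^2) = (ε*s - 2*p^2*t)/(2*p^2*s) := by
      field_simp; ring
    rw [show -t/s + ε/(2*p^2) = (ε*s - 2*p^2*t)/(2*p^2*s) from hnum]
    rw [abs_div, abs_of_pos (show (0:ℝ) < 2*p^2*s by positivity),
      div_le_iff₀ (show (0:ℝ) < 2*p^2*s by positivity)]
    exact hc3
  set A := TmatR v (El l - ε) - !![1, v; 0, 1] * (1 + ε • !![0, 1/2; -(1/(2 * El l)), 0]) with hA
  have hone : (1 : Matrix (Fin 2) (Fin 2) ℝ) + ε • !![0, 1/2; -(1/(2 * El l)), 0]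
      = !![1, ε/2; -(ε/(2 * El l)), 1] := by
    ext i j
    fin_cases i <;> fin_cases j <;>
      simp [Matrix.one_apply, Matrix.add_apply, Matrix.smul_apply] <;> ring
  have hmul : !![(1:ℝ), v; 0, 1] * !![1, ε/2; -(ε/(2 * El l)), 1]
      = !![1 - v*(ε/(2 * El l)), ε/2 + v; -(ε/(2 * El l)), 1] := by
    ext i j
    fin_cases i <;> fin_cases j <;>
      simp [Matrix.mul_apply, Fin.sum_univ_two] <;> ring
  have hT : TmatR v (El l - ε)
      = !![Real.cos s + v*(Real.sin s/s), -s*Real.sin s + v*Real.cos s;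
           Real.sin s/s, Real.cos s] := by
    rw [TmatR, ← hs_def]
    ext i j
    fin_cases i <;> fin_cases j <;>
      simp [Matrix.mul_apply, Fin.sum_univ_two] <;> ring
  have hAe : A = !![(Real.cos s - 1) + v * (Real.sin s / s + ε/(2 * El l)),
                    ((-s) * Real.sin s - ε/2) + v * (Real.cos s - 1);
                    Real.sin s / s + ε/(2 * El l), Real.cos s - 1] := by
    rw [hA, hone, hmul, hT]
    ext i j
    fin_cases i <;> fin_cases j <;>
      simp [Matrix.sub_apply] <;> ring
  have e00 : A 0 0 = (Real.cos s - 1) + v * (Real.sin s / s + ε/(2 * El l)) := by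
    rw [hAe]; simp
  have e01 : A 0 1 = ((-s) * Real.sin s - ε/2) + v * (Real.cos s - 1) := by
    rw [hAe]; simp
  have e10 : A 1 0 = Real.sin s / s + ε/(2 * El l) := by
    rw [hAe]; simp
  have e11 : A 1 1 = Real.cos s - 1 := by
    rw [hAe]; simp
  have h00 : |A 0 0| ≤ ε^2 + |v| * (4*ε^2) := by
    rw [e00]
    refine le_trans (abs_add_le _ _) ?_
    rw [abs_mul]
    have := mul_le_mul_of_nonneg_left hf3 (abs_nonneg v)
    linarith
  have h01 : |A 0 1| ≤ (p/4 + 1/2) * ε^2 + |v| * ε^2 := by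
    rw [e01]
    refine le_trans (abs_add_le _ _) ?_
    rw [abs_mul]
    have := mul_le_mul_of_nonneg_left hf1 (abs_nonneg v)
    linarith
  have h10 : |A 1 0| ≤ 4*ε^2 := by rw [e10]; exact hf3
  have h11 : |A 1 1| ≤ ε^2 := by rw [e11]; exact hf1
  have hv0 : 0 ≤ |v| := abs_nonneg v
  have hve : 0 ≤ |v| * ε^2 := by positivity
  have hpe : 0 ≤ p * ε^2 := by positivity
  have hvpe : 0 ≤ |v| * (p * ε^2) := by positivity
  have hsum : |A 0 0| + |A 0 1| + |A 1 0| + |A 1 1| ≤ (1 + |v|) * (p + 7) * ε^2 := by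
    have hexp : (1 + |v|) * (p + 7) * ε^2
        = p * ε^2 + 7 * ε^2 + |v| * (p * ε^2) + 7 * (|v| * ε^2) := by ring
    rw [hexp]
    have h4v : |v| * (4*ε^2) = 4 * (|v| * ε^2) := by ring
    rw [h4v] at h00
    linarith
  calc opR A ≤ |A 0 0| + |A 0 1| + |A 1 0| + |A 1 1| := opR_le_entries A
    _ ≤ (1 + |v|) * (p + 7) * ε^2 := hsum
    _ ≤ (1 + R) * (p + 7) * ε^2 := by
        have h1 : (1 + |v|) * (p + 7) ≤ (1 + R) * (p + 7) :=
          mul_le_mul_of_nonneg_right (by linarith) (by linarith)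
        exact mul_le_mul_of_nonneg_right h1 hεp0.le
end
end

section
/- Let (v_j)_{j≥1} be real numbers contained in a compact set K ⊂ ℝ, let v̄ > 0 be a fixed real, let l ≥ 1 be an even integer with E_l = (πl)², and let (θ_n)_{n≥0} be the modified Prüfer phases. Then there exist ε₀ > 0 and a constant C (depending only on K, v̄, l) such that for all 0 < ε ≤ ε₀ and all integers 0 ≤ m ≤ n: |log‖M^ε·T^{E_l−ε}(n,m)·(M^ε)^{−1}·e_{θ_m}‖ − ε^{1/2}·Σ_{j=m+1}^{n} X_j| ≤ C·(n−m)·ε, where X_j = −((v_j − v̄)/(2·(2v̄E_l)^{1/2}))·cos(2θ_{j−1}). -/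
open Matrix Real Filter MeasureTheory ProbabilityTheory

noncomputable section

/-! ### Auxiliary lemmas -/

lemma vnormR_eq (x : Fin 2 → ℝ) : vnormR x = Real.sqrt (x 0 ^ 2 + x 1 ^ 2) := by
  simp [vnormR, EuclideanSpace.norm_eq, Fin.sum_univ_two, sq_abs]

lemma vnormR_smul (r : ℝ) (x : Fin 2 → ℝ) : vnormR (r • x) = |r| * vnormR x := by
  simp only [vnormR_eq, Pi.smul_apply, smul_eq_mul, mul_pow, ← mul_add,
    Real.sqrt_mul (sq_nonneg r), Real.sqrt_sq_eq_abs]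

lemma vnormR_eth (θ : ℝ) : vnormR (eth θ) = 1 := by
  simp [vnormR_eq, eth]

lemma cos_toIcoMod (x : ℝ) : Real.cos (toIcoMod Real.two_pi_pos 0 x) = Real.cos x := by
  rw [toIcoMod, zsmul_eq_mul]
  rw [Real.cos_sub_int_mul_two_pi]

lemma sin_toIcoMod (x : ℝ) : Real.sin (toIcoMod Real.two_pi_pos 0 x) = Real.sin x := by
  rw [toIcoMod, zsmul_eq_mul]
  rw [Real.sin_sub_int_mul_two_pi]

lemma eth_SMap (A : Matrix (Fin 2) (Fin 2) ℝ) (θ : ℝ) (h : A.mulVec (eth θ) ≠ 0) :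
    A.mulVec (eth θ) = vnormR (A.mulVec (eth θ)) • eth (SMap A θ) := by
  set u := A.mulVec (eth θ) with hu
  set z : ℂ := Complex.mk (u 0) (u 1) with hz
  have hz0 : z ≠ 0 := by
    intro h0
    apply h
    rw [Complex.ext_iff] at h0
    simp only [hz] at h0
    funext i
    fin_cases i
    · exact h0.1
    · exact h0.2
  have habs : ‖z‖ = vnormR u := by
    rw [Complex.norm_def, Complex.normSq_apply, vnormR_eq]
    simp [hz, sq]
  have hc : Real.cos (SMap A θ) = u 0 / vnormR u := by
    rw [SMap, cos_toIcoMod, ← hu, Complex.cos_arg hz0, habs]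
  have hs : Real.sin (SMap A θ) = u 1 / vnormR u := by
    rw [SMap, sin_toIcoMod, ← hu, Complex.sin_arg, habs]
  have hn : vnormR u ≠ 0 := by
    rw [vnormR_eq]
    intro h0
    apply h
    have h1 := (Real.sqrt_eq_zero (by positivity)).mp h0
    funext i
    have h00 : u 0 = 0 := by nlinarith [sq_nonneg (u 0), sq_nonneg (u 1)]
    have h11 : u 1 = 0 := by nlinarith [sq_nonneg (u 0), sq_nonneg (u 1)]
    fin_cases i <;> assumption
  funext i
  fin_cases i <;> simp [eth, hc, hs, mul_div_cancel₀, hn, mul_div_assoc] <;> field_simp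

lemma Elpos (l : ℕ) (hl : 1 ≤ l) : 0 < El l := by
  have h : (0:ℝ) < l := by exact_mod_cast hl
  have h2 := Real.pi_pos
  rw [El]
  positivity

lemma bpos (vb : ℝ) (hvb : 0 < vb) (l : ℕ) (hl : 1 ≤ l) :
    0 < (vb * El l / 2) ^ ((1 : ℝ)/4) := by
  have := Elpos l hl
  exact Real.rpow_pos_of_pos (by positivity) _

lemma Meps_eq (vb : ℝ) (l : ℕ) (ε : ℝ) :
    Meps vb l ε = (let b : ℝ := (vb * El l / 2) ^ ((1 : ℝ)/4)
      !![Real.sqrt ε/(2*b), -b; Real.sqrt ε/(2*b), b]) := by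
  simp only [Meps, Matrix.mul_fin_two]
  ext i j
  fin_cases i <;> fin_cases j <;> simp <;> ring

lemma Meps_inv (vb : ℝ) (hvb : 0 < vb) (l : ℕ) (hl : 1 ≤ l) (ε : ℝ) (hε : 0 < ε) :
    (Meps vb l ε)⁻¹ = (let b : ℝ := (vb * El l / 2) ^ ((1 : ℝ)/4)
      !![b/Real.sqrt ε, b/Real.sqrt ε; -1/(2*b), 1/(2*b)]) := by
  have hb := bpos vb hvb l hl
  have he : Real.sqrt ε ≠ 0 := by positivity
  apply Matrix.inv_eq_right_inv
  rw [Meps_eq]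
  simp only []
  rw [Matrix.mul_fin_two]
  ext i j
  fin_cases i <;> fin_cases j <;> field_simp <;> ring <;> simp

lemma Meps_det (vb : ℝ) (hvb : 0 < vb) (l : ℕ) (hl : 1 ≤ l) (ε : ℝ) (hε : 0 < ε) :
    IsUnit (Meps vb l ε).det := by
  have hb := bpos vb hvb l hl
  have he : (0:ℝ) < Real.sqrt ε := by positivity
  rw [Meps_eq]
  simp only [Matrix.det_fin_two_of]
  have : Real.sqrt ε / (2 * (vb * El l / 2) ^ ((1:ℝ)/4)) * (vb * El l / 2) ^ ((1:ℝ)/4) -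
      -(vb * El l / 2) ^ ((1:ℝ)/4) * (Real.sqrt ε / (2 * (vb * El l / 2) ^ ((1:ℝ)/4)))
      = Real.sqrt ε := by field_simp; ring
  rw [this]
  exact (isUnit_iff_ne_zero).2 (ne_of_gt he)

lemma mulVec_fin_two (a b c d x y : ℝ) :
    (!![a, b; c, d]).mulVec ![x, y] = ![a*x + b*y, c*x + d*y] := by
  funext i
  fin_cases i <;> simp [Matrix.mulVec, dotProduct, Fin.sum_univ_two]

set_option maxHeartbeats 8000000 in
/-- The single-step estimate. -/
lemma step_est (vb : ℝ) (hvb : 0 < vb) (l : ℕ) (hl : 1 ≤ l) (hleven : Even l)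
    (VK : ℝ) (hVK : 0 ≤ VK) :
    ∃ ε₀ > (0:ℝ), ∃ C : ℝ, 0 ≤ C ∧ ∀ v : ℝ, |v| ≤ VK → ∀ ε : ℝ, 0 < ε → ε ≤ ε₀ → ∀ θ : ℝ,
      (1/2 : ℝ) ≤ vnormR ((Meps vb l ε * TmatR v (El l - ε) * (Meps vb l ε)⁻¹).mulVec (eth θ)) ∧
      |Real.log (vnormR ((Meps vb l ε * TmatR v (El l - ε) * (Meps vb l ε)⁻¹).mulVec (eth θ)))
        - Real.sqrt ε * (-((v - vb) / (2 * Real.sqrt (2 * vb * El l)) * Real.cos (2 * θ)))|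
        ≤ C * ε := by
  have hpi := Real.pi_gt_three
  have hl1 : (1:ℝ) ≤ (l:ℝ) := by exact_mod_cast hl
  obtain ⟨p, hpdef⟩ : ∃ x : ℝ, x = Real.pi * l := ⟨_, rfl⟩
  have hp1 : 1 ≤ p := by rw [hpdef]; nlinarith only [hpi, hl1]
  have hp0 : 0 < p := by linarith
  have hEl : El l = p^2 := by rw [El, hpdef]
  obtain ⟨b, hbdef⟩ : ∃ x : ℝ, x = (vb * El l / 2) ^ ((1:ℝ)/4) := ⟨_, rfl⟩
  have hb : 0 < b := by rw [hbdef]; exact bpos vb hvb l hl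
  have hb2 : b^2 = Real.sqrt (vb * p^2 / 2) := by
    rw [hbdef, hEl, Real.sqrt_eq_rpow, ← Real.rpow_natCast ((vb * p^2 / 2) ^ ((1:ℝ)/4)) 2,
      ← Real.rpow_mul (by positivity)]
    norm_num
  obtain ⟨κ, hκdef⟩ : ∃ x : ℝ, x = 1/(2*Real.sqrt (2*vb*El l)) := ⟨_, rfl⟩
  have hbsq_pos : 0 < Real.sqrt (vb*p^2/2) := Real.sqrt_pos.mpr (by positivity)
  have hsq2 : Real.sqrt (2*vb*p^2) = 2 * Real.sqrt (vb*p^2/2) := by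
    rw [show 2*vb*p^2 = 2^2*(vb*p^2/2) by ring,
      Real.sqrt_mul (by positivity), Real.sqrt_sq (by norm_num)]
  have hκ : 0 < κ := by
    rw [hκdef, hEl]
    have : 0 < Real.sqrt (2*vb*p^2) := Real.sqrt_pos.mpr (by positivity)
    positivity
  have hκ2 : 1/(4*b^2) = κ := by
    rw [hκdef, hEl, hsq2, hb2]; ring
  have hss : Real.sqrt (vb*p^2/2) * Real.sqrt (vb*p^2/2) = vb*p^2/2 :=
    Real.mul_self_sqrt (by positivity)
  have hb4 : b^2*b^2 = vb*p^2/2 := by rw [hb2]; exact hss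
  have hκ1 : b^2/(2*p^2) = vb*κ := by
    rw [← hκ2]
    field_simp
    nlinarith only [hb4]
  -- constants
  obtain ⟨Xm, hXmdef⟩ : ∃ x : ℝ, x = κ*(vb+VK) := ⟨_, rfl⟩
  have hXm0 : 0 < Xm := by rw [hXmdef]; exact mul_pos hκ (by linarith)
  obtain ⟨C₀, hC₀def⟩ : ∃ x : ℝ, x = (1+VK) + VK + 6*b^2 + κ*(p+VK) := ⟨_, rfl⟩
  have hC₀0 : 0 < C₀ := by
    rw [hC₀def]
    nlinarith only [pow_pos hb 2, mul_pos hκ (show (0:ℝ) < p + VK by linarith), hVK]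
  obtain ⟨C₂, hC₂def⟩ : ∃ x : ℝ, x = 2*C₀ := ⟨_, rfl⟩
  have hC₂0 : 0 < C₂ := by rw [hC₂def]; linarith
  obtain ⟨W, hWdef⟩ : ∃ x : ℝ, x = 1 + 2*Xm := ⟨_, rfl⟩
  have hW0 : 0 < W := by rw [hWdef]; linarith
  obtain ⟨C₄, hC₄def⟩ : ∃ x : ℝ, x = 8*Xm^2 + 4*W*C₂ + 2*C₂^2 := ⟨_, rfl⟩
  have hC₄0 : 0 < C₄ := by
    rw [hC₄def]
    nlinarith only [sq_nonneg Xm, mul_pos hW0 hC₂0, pow_pos hC₂0 2]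
  refine ⟨min (min 1 (p^2/2)) (min (1/4) (min (1/(64*Xm^2+1)) (1/(4*C₄+1)))),
    lt_min (lt_min one_pos (by nlinarith only [hp0])) (lt_min (by norm_num)
      (lt_min (one_div_pos.mpr (by positivity)) (one_div_pos.mpr (by nlinarith only [hC₄0])))),
    8*Xm^2 + 2*C₄^2 + C₄, by nlinarith only [sq_nonneg Xm, sq_nonneg C₄, hC₄0], ?_⟩
  intro v hvK ε hε hεε θ
  have hε1 : ε ≤ 1 := le_trans hεε (le_trans (min_le_left _ _) (min_le_left _ _))
  have hεp : ε ≤ p^2/2 := le_trans hεε (le_trans (min_le_left _ _) (min_le_right _ _))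
  have hε4 : ε ≤ 1/4 := le_trans hεε (le_trans (min_le_right _ _) (min_le_left _ _))
  have hεX : ε ≤ 1/(64*Xm^2+1) := le_trans hεε (le_trans (min_le_right _ _)
    (le_trans (min_le_right _ _) (min_le_left _ _)))
  have hεC : ε ≤ 1/(4*C₄+1) := le_trans hεε (le_trans (min_le_right _ _)
    (le_trans (min_le_right _ _) (min_le_right _ _)))
  obtain ⟨e, hedef⟩ : ∃ x : ℝ, x = Real.sqrt ε := ⟨_, rfl⟩
  have he0 : 0 < e := by rw [hedef]; exact Real.sqrt_pos.mpr hε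
  have he2 : e^2 = ε := by rw [hedef]; exact Real.sq_sqrt hε.le
  have he1 : e ≤ 1 := by
    rw [hedef, show (1:ℝ) = Real.sqrt 1 by simp]
    exact Real.sqrt_le_sqrt hε1
  obtain ⟨a, hadef⟩ : ∃ x : ℝ, x = Real.sqrt (El l - ε) := ⟨_, rfl⟩
  have hEe : El l - ε = p^2 - ε := by rw [hEl]
  have hpe : 0 < p^2 - ε := by nlinarith only [hεp, hp1]
  have ha2 : a^2 = p^2 - ε := by rw [hadef, hEe]; exact Real.sq_sqrt hpe.le
  have ha0 : 0 < a := by rw [hadef, hEe]; positivity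
  have hap : a < p := by nlinarith only [ha2, ha0, hε, hp0]
  have hap2 : p/2 ≤ a := by nlinarith only [ha2, hεp, ha0, hp0, hp1]
  obtain ⟨c, hcdef⟩ : ∃ x : ℝ, x = Real.cos a := ⟨_, rfl⟩
  obtain ⟨s, hsdef⟩ : ∃ x : ℝ, x = Real.sin a := ⟨_, rfl⟩
  obtain ⟨dl, hdldef⟩ : ∃ x : ℝ, x = p - a := ⟨_, rfl⟩
  have hdl0 : 0 < dl := by rw [hdldef]; linarith
  have hdlε : dl*(p+a) = ε := by rw [hdldef]; linear_combination -ha2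
  have hdl_le : dl ≤ ε := by nlinarith only [hdlε, hdl0, hp1, ha0]
  have hdl1 : dl ≤ 1 := le_trans hdl_le hε1
  -- trig at p
  obtain ⟨k, hk⟩ := hleven
  have hsinp : Real.sin p = 0 := by
    rw [hpdef, mul_comm]; exact Real.sin_nat_mul_pi l
  have hcosp : Real.cos p = 1 := by
    rw [hpdef, hk]
    push_cast
    rw [show Real.pi * ((k:ℝ)+(k:ℝ)) = (k:ℝ)*(2*Real.pi) by ring]
    exact Real.cos_nat_mul_two_pi k
  have hs_eq : s = -Real.sin dl := by
    rw [hsdef, show a = p - dl by rw [hdldef]; ring, Real.sin_sub, hsinp, hcosp]; ring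
  have hc_eq : c = Real.cos dl := by
    rw [hcdef, show a = p - dl by rw [hdldef]; ring, Real.cos_sub, hsinp, hcosp]; ring
  have hsd : |Real.sin dl - dl| ≤ dl^3/4 := by
    have h1 := Real.sin_lt hdl0
    have h2 := Real.sin_gt_sub_cube hdl0
    rw [abs_le]; constructor <;> nlinarith only [h1, h2, hdl0, hdl1]
  have hdiv : ε/(2*p)*(2*p) = ε := by field_simp
  have hdle2 : 2*p*dl - dl^2 = ε := by rw [hdldef]; linear_combination -ha2
  have hdl2 : |dl - ε/(2*p)| ≤ ε^2 := by
    rw [abs_le]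
    constructor <;> nlinarith only [hdle2, hdiv, hdl_le, hdl0, hε.le, hp1, sq_nonneg dl, sq_nonneg ε]
  have hs_bound : |s + ε/(2*p)| ≤ 2*ε^2 := by
    rw [hs_eq]
    have h1 := abs_le.mp hsd
    have h2 := abs_le.mp hdl2
    rw [abs_le]
    constructor <;> nlinarith only [h1.1, h1.2, h2.1, h2.2, pow_le_pow_left₀ hdl0.le hdl_le 3, hε.le, hε1, hdl0.le, hdl_le, sq_nonneg ε]
  have h2p : ε/(2*p) ≤ ε/2 := by
    rw [div_le_div_iff₀ (by linarith) (by norm_num)]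
    nlinarith only [hε.le, hp1]
  have hx0 : 0 ≤ ε/(2*p) := by positivity
  -- basic trig bounds at a
  have hs_abs : |s| ≤ ε := by
    have h1 := abs_le.mp hs_bound
    rw [abs_le]
    constructor <;> nlinarith only [h1.1, h1.2, h2p, hε4, hε.le, hx0, hdiv, hp1]
  have hc_bound : |c - 1| ≤ ε^2 := by
    rw [hc_eq, abs_le]
    constructor
    · nlinarith only [Real.one_sub_sq_div_two_le_cos (x := dl), hdl_le, hε1, hdl0, hε.le, sq_nonneg ε]
    · nlinarith only [Real.cos_le_one dl, sq_nonneg ε]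
  -- the conjugated matrix
  obtain ⟨al, haldef⟩ : ∃ x : ℝ, x = c + v*s/(2*a) := ⟨_, rfl⟩
  obtain ⟨be, hbedef⟩ : ∃ x : ℝ, x = v*s/(2*a) := ⟨_, rfl⟩
  obtain ⟨ga, hgadef⟩ : ∃ x : ℝ, x = -(b^2*s)/(a*e) := ⟨_, rfl⟩
  obtain ⟨dd, hdddef⟩ : ∃ x : ℝ, x = e*(-(a*s) + v*c)/(4*b^2) := ⟨_, rfl⟩
  have hB : Meps vb l ε * TmatR v (El l - ε) * (Meps vb l ε)⁻¹
      = !![al+ga-dd, be+ga+dd; be-ga-dd, al-ga+dd] := by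
    rw [Meps_inv vb hvb l hl ε hε, Meps_eq, TmatR]
    simp only []
    rw [← hbdef, ← hedef, ← hadef, ← hcdef, ← hsdef]
    rw [Matrix.mul_fin_two, Matrix.mul_fin_two, Matrix.mul_fin_two]
    have hae : a ≠ 0 := ne_of_gt ha0
    have hee : e ≠ 0 := ne_of_gt he0
    have hbe' : b ≠ 0 := ne_of_gt hb
    ext i j
    fin_cases i <;> fin_cases j <;>
      simp only [Matrix.of_apply, Matrix.cons_val', Matrix.cons_val_zero, Matrix.cons_val_one,
        Matrix.head_cons, Matrix.empty_val', Matrix.cons_val_fin_one, Matrix.head_fin_const] <;>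
      rw [haldef, hbedef, hgadef, hdddef] <;> field_simp <;> ring
  have hu : (Meps vb l ε * TmatR v (El l - ε) * (Meps vb l ε)⁻¹).mulVec (eth θ)
      = ![(al+ga-dd)*Real.cos θ + (be+ga+dd)*Real.sin θ,
          (be-ga-dd)*Real.cos θ + (al-ga+dd)*Real.sin θ] := by
    rw [hB, eth, _root_.mulVec_fin_two]
  -- bounds on the four scalar entries
  have hbe_bound : |be| ≤ VK*ε := by
    rw [hbedef, abs_div, abs_mul]
    rw [abs_of_pos (show (0:ℝ) < 2*a by linarith)]
    rw [div_le_iff₀ (by linarith)]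
    have h1 : |v| * |s| ≤ VK*ε := mul_le_mul hvK hs_abs (abs_nonneg s) hVK
    nlinarith only [h1, mul_nonneg (mul_nonneg hVK hε.le) (by linarith : (0:ℝ) ≤ 2*a - 1)]
  have hal_bound : |al - 1| ≤ (1+VK)*ε := by
    rw [haldef, show c + v*s/(2*a) - 1 = (c-1) + v*s/(2*a) by ring]
    calc |(c-1) + v*s/(2*a)| ≤ |c-1| + |v*s/(2*a)| := abs_add_le _ _
      _ ≤ ε^2 + VK*ε := by
          refine add_le_add hc_bound ?_
          rw [← hbedef]; exact hbe_bound
      _ ≤ (1+VK)*ε := by nlinarith only [hε.le, hε1]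
  have hga_id : ga - e*(vb*κ) = -(b^2/(a*e))*(s + ε*a/(2*p^2)) := by
    rw [hgadef, ← hκ1, ← he2]
    field_simp
    ring
  have hga_bound : |ga - e*(vb*κ)| ≤ 6*b^2*ε := by
    have hid : s + ε*a/(2*p^2) = (s + ε/(2*p)) - ε*dl/(2*p^2) := by
      rw [hdldef]; field_simp; ring
    have h4 : |ε*dl/(2*p^2)| ≤ ε^2 := by
      rw [abs_of_nonneg (div_nonneg (mul_nonneg hε.le hdl0.le) (by positivity))]
      rw [div_le_iff₀ (by positivity)]
      nlinarith only [mul_le_mul_of_nonneg_left hdl_le hε.le,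
        mul_nonneg (mul_nonneg hε.le hε.le) (by nlinarith only [hp1] : (0:ℝ) ≤ 2*p^2 - 1)]
    have h3 : |s + ε*a/(2*p^2)| ≤ 3*ε^2 := by
      rw [hid, sub_eq_add_neg]
      calc |(s + ε/(2*p)) + -(ε*dl/(2*p^2))| ≤ |s + ε/(2*p)| + |-(ε*dl/(2*p^2))| := abs_add_le _ _
        _ = |s + ε/(2*p)| + |ε*dl/(2*p^2)| := by rw [abs_neg]
        _ ≤ 2*ε^2 + ε^2 := add_le_add hs_bound h4
        _ = 3*ε^2 := by ring
    calc |ga - e*(vb*κ)| = b^2/(a*e) * |s + ε*a/(2*p^2)| := by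
          rw [hga_id, abs_mul, abs_neg, abs_of_pos (by positivity)]
      _ ≤ b^2/(a*e) * (3*ε^2) := mul_le_mul_of_nonneg_left h3 (by positivity)
      _ ≤ 6*b^2*ε := by
          rw [← he2, div_mul_eq_mul_div, div_le_iff₀ (by positivity)]
          have h2ae : e ≤ 2*a := by nlinarith only [he1, hap2, hp1]
          have h188 : 0 ≤ 3*b^2*e^3*(2*a - e) :=
            mul_nonneg (mul_nonneg (mul_nonneg (by norm_num : (0:ℝ) ≤ 3) (sq_nonneg b))
              (pow_nonneg he0.le 3)) (sub_nonneg.mpr h2ae)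
          nlinarith only [h188]
  have hdd_id : dd - e*(v*κ) = e*κ*(-(a*s) + v*(c-1)) := by
    rw [hdddef, ← hκ2]; field_simp; ring
  have hdd_bound : |dd - e*(v*κ)| ≤ κ*(p+VK)*ε := by
    have hz : |(-(a*s)) + v*(c-1)| ≤ p*ε + VK*ε := by
      calc |(-(a*s)) + v*(c-1)| ≤ |(-(a*s))| + |v*(c-1)| := abs_add_le _ _
        _ = |a| * |s| + |v| * |c-1| := by rw [abs_neg, abs_mul, abs_mul]
        _ ≤ p*ε + VK*(ε^2) := by
            refine add_le_add ?_ ?_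
            · exact mul_le_mul (by rw [abs_of_pos ha0]; exact hap.le) hs_abs (abs_nonneg _) hp0.le
            · exact mul_le_mul hvK hc_bound (abs_nonneg _) hVK
        _ ≤ p*ε + VK*ε := by
            nlinarith only [mul_le_mul_of_nonneg_left
              (show ε^2 ≤ ε by nlinarith only [hε.le, hε1]) hVK]
    calc |dd - e*(v*κ)| = e*κ * |(-(a*s)) + v*(c-1)| := by
          rw [hdd_id, abs_mul, abs_mul, abs_of_pos he0, abs_of_pos hκ]
      _ ≤ 1*(κ*(p*ε + VK*ε)) := by
          rw [mul_assoc]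
          refine mul_le_mul he1 (mul_le_mul_of_nonneg_left hz hκ.le) ?_ (by norm_num)
          positivity
      _ = κ*(p+VK)*ε := by ring
  -- X and Y
  obtain ⟨X, hXdef⟩ : ∃ x : ℝ, x = κ*(vb - v) := ⟨_, rfl⟩
  obtain ⟨Y, hYdef⟩ : ∃ x : ℝ, x = κ*(vb + v) := ⟨_, rfl⟩
  have hvv := abs_le.mp hvK
  have hXb : |X| ≤ Xm := by
    rw [hXdef, hXmdef, abs_mul, abs_of_pos hκ]
    refine mul_le_mul_of_nonneg_left ?_ hκ.le
    rw [abs_le]; constructor <;> linarith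
  have hYb : |Y| ≤ Xm := by
    rw [hYdef, hXmdef, abs_mul, abs_of_pos hκ]
    refine mul_le_mul_of_nonneg_left ?_ hκ.le
    rw [abs_le]; constructor <;> linarith
  -- entry errors
  have hE00 : |(al+ga-dd) - (1 + e*X)| ≤ C₀*ε := by
    rw [show (al+ga-dd) - (1+e*X) = (al-1) + (ga - e*(vb*κ)) - (dd - e*(v*κ)) by rw [hXdef]; ring]
    calc |(al-1) + (ga - e*(vb*κ)) - (dd - e*(v*κ))|
        ≤ |(al-1) + (ga - e*(vb*κ))| + |dd - e*(v*κ)| := abs_sub _ _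
      _ ≤ |al-1| + |ga - e*(vb*κ)| + |dd - e*(v*κ)| := by
          linarith [abs_add_le (al-1) (ga - e*(vb*κ))]
      _ ≤ (1+VK)*ε + 6*b^2*ε + κ*(p+VK)*ε := by linarith [hal_bound, hga_bound, hdd_bound]
      _ ≤ C₀*ε := by rw [hC₀def]; nlinarith only [hVK, hε.le]
  have hE01 : |(be+ga+dd) - e*Y| ≤ C₀*ε := by
    rw [show (be+ga+dd) - e*Y = be + (ga - e*(vb*κ)) + (dd - e*(v*κ)) by rw [hYdef]; ring]
    calc |be + (ga - e*(vb*κ)) + (dd - e*(v*κ))|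
        ≤ |be + (ga - e*(vb*κ))| + |dd - e*(v*κ)| := abs_add_le _ _
      _ ≤ |be| + |ga - e*(vb*κ)| + |dd - e*(v*κ)| := by
          linarith [abs_add_le be (ga - e*(vb*κ))]
      _ ≤ VK*ε + 6*b^2*ε + κ*(p+VK)*ε := by linarith [hbe_bound, hga_bound, hdd_bound]
      _ ≤ C₀*ε := by rw [hC₀def]; nlinarith only [hVK, hε.le]
  have hE10 : |(be-ga-dd) - (-(e*Y))| ≤ C₀*ε := by
    rw [show (be-ga-dd) - (-(e*Y)) = be - (ga - e*(vb*κ)) - (dd - e*(v*κ)) by rw [hYdef]; ring]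
    calc |be - (ga - e*(vb*κ)) - (dd - e*(v*κ))|
        ≤ |be - (ga - e*(vb*κ))| + |dd - e*(v*κ)| := abs_sub _ _
      _ ≤ |be| + |ga - e*(vb*κ)| + |dd - e*(v*κ)| := by
          linarith [abs_sub be (ga - e*(vb*κ))]
      _ ≤ VK*ε + 6*b^2*ε + κ*(p+VK)*ε := by linarith [hbe_bound, hga_bound, hdd_bound]
      _ ≤ C₀*ε := by rw [hC₀def]; nlinarith only [hVK, hε.le]
  have hE11 : |(al-ga+dd) - (1 - e*X)| ≤ C₀*ε := by
    rw [show (al-ga+dd) - (1 - e*X) = (al-1) - (ga - e*(vb*κ)) + (dd - e*(v*κ)) by rw [hXdef]; ring]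
    calc |(al-1) - (ga - e*(vb*κ)) + (dd - e*(v*κ))|
        ≤ |(al-1) - (ga - e*(vb*κ))| + |dd - e*(v*κ)| := abs_add_le _ _
      _ ≤ |al-1| + |ga - e*(vb*κ)| + |dd - e*(v*κ)| := by
          linarith [abs_sub (al-1) (ga - e*(vb*κ))]
      _ ≤ (1+VK)*ε + 6*b^2*ε + κ*(p+VK)*ε := by linarith [hal_bound, hga_bound, hdd_bound]
      _ ≤ C₀*ε := by rw [hC₀def]; nlinarith only [hVK, hε.le]
  -- vector components
  obtain ⟨ct, hctdef⟩ : ∃ x : ℝ, x = Real.cos θ := ⟨_, rfl⟩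
  obtain ⟨st, hstdef⟩ : ∃ x : ℝ, x = Real.sin θ := ⟨_, rfl⟩
  have hcs : ct^2 + st^2 = 1 := by rw [hctdef, hstdef]; exact Real.cos_sq_add_sin_sq θ
  have hct1 : |ct| ≤ 1 := by rw [hctdef]; exact Real.abs_cos_le_one θ
  have hst1 : |st| ≤ 1 := by rw [hstdef]; exact Real.abs_sin_le_one θ
  obtain ⟨u0, hu0def⟩ : ∃ x : ℝ, x = (al+ga-dd)*ct + (be+ga+dd)*st := ⟨_, rfl⟩
  obtain ⟨u1, hu1def⟩ : ∃ x : ℝ, x = (be-ga-dd)*ct + (al-ga+dd)*st := ⟨_, rfl⟩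
  obtain ⟨w0, hw0def⟩ : ∃ x : ℝ, x = ct + e*(X*ct + Y*st) := ⟨_, rfl⟩
  obtain ⟨w1, hw1def⟩ : ∃ x : ℝ, x = st + e*(-(Y*ct) - X*st) := ⟨_, rfl⟩
  have hC₀ε : 0 ≤ C₀*ε := mul_nonneg hC₀0.le hε.le
  have hd0b : |u0 - w0| ≤ C₂*ε := by
    rw [show u0 - w0 = ((al+ga-dd) - (1+e*X))*ct + ((be+ga+dd) - e*Y)*st by
      rw [hu0def, hw0def]; ring]
    calc |((al+ga-dd) - (1+e*X))*ct + ((be+ga+dd) - e*Y)*st|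
        ≤ |((al+ga-dd) - (1+e*X))*ct| + |((be+ga+dd) - e*Y)*st| := abs_add_le _ _
      _ = |(al+ga-dd) - (1+e*X)| * |ct| + |(be+ga+dd) - e*Y| * |st| := by rw [abs_mul, abs_mul]
      _ ≤ (C₀*ε)*1 + (C₀*ε)*1 :=
          add_le_add (mul_le_mul hE00 hct1 (abs_nonneg _) hC₀ε)
            (mul_le_mul hE01 hst1 (abs_nonneg _) hC₀ε)
      _ = C₂*ε := by rw [hC₂def]; ring
  have hd1b : |u1 - w1| ≤ C₂*ε := by
    rw [show u1 - w1 = ((be-ga-dd) - (-(e*Y)))*ct + ((al-ga+dd) - (1 - e*X))*st by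
      rw [hu1def, hw1def]; ring]
    calc |((be-ga-dd) - (-(e*Y)))*ct + ((al-ga+dd) - (1 - e*X))*st|
        ≤ |((be-ga-dd) - (-(e*Y)))*ct| + |((al-ga+dd) - (1 - e*X))*st| := abs_add_le _ _
      _ = |(be-ga-dd) - (-(e*Y))| * |ct| + |(al-ga+dd) - (1 - e*X)| * |st| := by rw [abs_mul, abs_mul]
      _ ≤ (C₀*ε)*1 + (C₀*ε)*1 :=
          add_le_add (mul_le_mul hE10 hct1 (abs_nonneg _) hC₀ε)
            (mul_le_mul hE11 hst1 (abs_nonneg _) hC₀ε)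
      _ = C₂*ε := by rw [hC₂def]; ring
  -- the exact norm identity for w
  have hw_id : w0^2 + w1^2
      = 1 + 2*e*X*(ct^2 - st^2) + e^2*((X*ct+Y*st)^2 + (Y*ct+X*st)^2) := by
    rw [hw0def, hw1def]
    linear_combination hcs
  have hG1 : (X^2+Y^2)*(ct^2+st^2) = X^2+Y^2 := by rw [hcs]; ring
  have hX2 : X^2 ≤ Xm^2 := by nlinarith only [abs_le.mp hXb, hXm0]
  have hY2 : Y^2 ≤ Xm^2 := by nlinarith only [abs_le.mp hYb, hXm0]
  have hGa : (X*ct+Y*st)^2 ≤ 2*Xm^2 := by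
    nlinarith only [sq_nonneg (X*st - Y*ct), hG1, hX2, hY2]
  have hGb : (Y*ct+X*st)^2 ≤ 2*Xm^2 := by
    nlinarith only [sq_nonneg (Y*st - X*ct), hG1, hX2, hY2]
  -- |w| bounds
  have hwnorm : ∀ z0 z1 : ℝ, z0 = w0 ∨ z0 = w1 → True := fun _ _ _ => trivial
  have hw0b : |w0| ≤ W := by
    rw [hw0def, hWdef]
    calc |ct + e*(X*ct + Y*st)| ≤ |ct| + |e*(X*ct+Y*st)| := abs_add_le _ _
      _ = |ct| + e * |X*ct+Y*st| := by rw [abs_mul, abs_of_pos he0]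
      _ ≤ 1 + 1 * |X*ct+Y*st| := by
          refine add_le_add hct1 (mul_le_mul_of_nonneg_right he1 (abs_nonneg _))
      _ ≤ 1 + (Xm*1 + Xm*1) := by
          rw [one_mul]
          refine add_le_add_right ((abs_add_le _ _).trans ?_) 1
          rw [abs_mul, abs_mul]
          exact add_le_add (mul_le_mul hXb hct1 (abs_nonneg _) hXm0.le)
            (mul_le_mul hYb hst1 (abs_nonneg _) hXm0.le)
      _ = 1 + 2*Xm := by ring
  have hw1b : |w1| ≤ W := by
    rw [hw1def, hWdef]
    calc |st + e*(-(Y*ct) - X*st)| ≤ |st| + |e*(-(Y*ct) - X*st)| := abs_add_le _ _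
      _ = |st| + e * |(-(Y*ct)) - X*st| := by rw [abs_mul, abs_of_pos he0]
      _ ≤ 1 + 1 * |(-(Y*ct)) - X*st| := by
          refine add_le_add hst1 (mul_le_mul_of_nonneg_right he1 (abs_nonneg _))
      _ ≤ 1 + (Xm*1 + Xm*1) := by
          rw [one_mul]
          refine add_le_add_right ((abs_sub _ _).trans ?_) 1
          rw [abs_neg, abs_mul, abs_mul]
          exact add_le_add (mul_le_mul hYb hct1 (abs_nonneg _) hXm0.le)
            (mul_le_mul hXb hst1 (abs_nonneg _) hXm0.le)
      _ = 1 + 2*Xm := by ring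
  -- r² estimate
  have hkey_id : u0^2 + u1^2 - (1 + 2*e*X*(ct^2 - st^2))
      = e^2*((X*ct+Y*st)^2 + (Y*ct+X*st)^2)
        + 2*(w0*(u0-w0) + w1*(u1-w1)) + ((u0-w0)^2 + (u1-w1)^2) := by
    linear_combination hw_id
  have hr2 : |u0^2 + u1^2 - (1 + 2*e*X*(ct^2 - st^2))| ≤ C₄*ε := by
    rw [hkey_id]
    have hA : |e^2*((X*ct+Y*st)^2 + (Y*ct+X*st)^2)| ≤ 4*Xm^2*ε := by
      rw [abs_of_nonneg (by positivity), he2]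
      nlinarith only [hGa, hGb, hε.le]
    have hBt : |2*(w0*(u0-w0) + w1*(u1-w1))| ≤ 4*W*(C₂*ε) := by
      have h1 : |w0*(u0-w0)| ≤ W*(C₂*ε) := by
        rw [abs_mul]
        exact mul_le_mul hw0b hd0b (abs_nonneg _) hW0.le
      have h2 : |w1*(u1-w1)| ≤ W*(C₂*ε) := by
        rw [abs_mul]
        exact mul_le_mul hw1b hd1b (abs_nonneg _) hW0.le
      calc |2*(w0*(u0-w0) + w1*(u1-w1))| = 2 * |w0*(u0-w0) + w1*(u1-w1)| := by
            rw [abs_mul, abs_two]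
        _ ≤ 2*(|w0*(u0-w0)| + |w1*(u1-w1)|) := by
            linarith only [abs_add_le (w0*(u0-w0)) (w1*(u1-w1))]
        _ ≤ 4*W*(C₂*ε) := by linarith only [h1, h2]
    have hCt : |(u0-w0)^2 + (u1-w1)^2| ≤ 2*C₂^2*ε := by
      rw [abs_of_nonneg (by positivity)]
      have h1 : (u0-w0)^2 ≤ (C₂*ε)^2 := by nlinarith only [abs_le.mp hd0b]
      have h2 : (u1-w1)^2 ≤ (C₂*ε)^2 := by nlinarith only [abs_le.mp hd1b]
      have hsq : (C₂*ε)^2 ≤ C₂^2*ε := by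
        nlinarith only [mul_nonneg (sq_nonneg C₂) hε.le, hε1]
      linarith only [h1, h2, hsq]
    calc |e^2*((X*ct+Y*st)^2 + (Y*ct+X*st)^2)
          + 2*(w0*(u0-w0) + w1*(u1-w1)) + ((u0-w0)^2 + (u1-w1)^2)|
        ≤ |e^2*((X*ct+Y*st)^2 + (Y*ct+X*st)^2) + 2*(w0*(u0-w0) + w1*(u1-w1))|
          + |(u0-w0)^2 + (u1-w1)^2| := abs_add_le _ _
      _ ≤ |e^2*((X*ct+Y*st)^2 + (Y*ct+X*st)^2)| + |2*(w0*(u0-w0) + w1*(u1-w1))|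
          + |(u0-w0)^2 + (u1-w1)^2| := by
          linarith [abs_add_le (e^2*((X*ct+Y*st)^2 + (Y*ct+X*st)^2))
            (2*(w0*(u0-w0) + w1*(u1-w1)))]
      _ ≤ 4*Xm^2*ε + 4*W*(C₂*ε) + 2*C₂^2*ε := by linarith [hA, hBt, hCt]
      _ ≤ C₄*ε := by rw [hC₄def]; nlinarith only [sq_nonneg Xm, hε.le]
  -- smallness
  have he2m : e^2*Xm^2 = ε*Xm^2 := by rw [he2]
  have hεX' : ε*(64*Xm^2+1) ≤ 1 := (le_div_iff₀ (by positivity)).mp hεX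
  have h2eXm : 2*e*Xm ≤ 1/4 := by
    nlinarith only [he2m, hεX', sq_nonneg (2*e*Xm - 1/4), mul_nonneg he0.le hXm0.le,
      mul_nonneg hε.le (sq_nonneg Xm), hε.le]
  have hεC' : ε*(4*C₄+1) ≤ 1 := (le_div_iff₀ (by nlinarith only [hC₄0])).mp hεC
  have hC4e : C₄*ε ≤ 1/4 := by nlinarith only [hεC', hC₄0, hε.le]
  have habs_cs : |ct^2 - st^2| ≤ 1 := by
    rw [abs_le]; constructor <;> nlinarith only [sq_nonneg ct, sq_nonneg st, hcs]
  have h2eXbound : |2*e*X*(ct^2-st^2)| ≤ 2*e*Xm := by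
    calc |2*e*X*(ct^2-st^2)| = (2*e*|X|) * |ct^2-st^2| := by
          rw [abs_mul, abs_mul, abs_mul, abs_two, abs_of_pos he0]
      _ ≤ (2*e*Xm)*1 := by
          refine mul_le_mul (by nlinarith only [hXb, he0.le]) habs_cs (abs_nonneg _) ?_
          nlinarith only [he0.le, hXm0.le]
      _ = 2*e*Xm := by ring
  have h2eX4 : |2*e*X*(ct^2-st^2)| ≤ 1/4 := h2eXbound.trans h2eXm
  have hr2low : 1/2 ≤ u0^2 + u1^2 := by
    have h1 := abs_le.mp hr2
    have h2 := abs_le.mp h2eX4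
    linarith only [h1.1, h1.2, h2.1, h2.2, hC4e]
  -- put the goal in terms of u0, u1
  have hgoalX : Real.sqrt ε * (-((v - vb) / (2 * Real.sqrt (2 * vb * El l)) * Real.cos (2 * θ)))
      = e*X*(ct^2 - st^2) := by
    have hdivκ : (v - vb)/(2*Real.sqrt (2*vb*El l)) = (v - vb)*κ := by
      rw [hκdef]; ring
    rw [hdivκ, ← hedef, hXdef, hctdef, hstdef, ← Real.cos_two_mul']
    ring
  have hvn : vnormR ((Meps vb l ε * TmatR v (El l - ε) * (Meps vb l ε)⁻¹).mulVec (eth θ))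
      = Real.sqrt (u0^2 + u1^2) := by
    rw [hu, vnormR_eq]
    simp only [Matrix.cons_val_zero, Matrix.cons_val_one, Matrix.head_cons]
    rw [hu0def, hu1def, hctdef, hstdef]
  constructor
  · rw [hvn]
    rw [show (1/2:ℝ) = Real.sqrt (1/4) by
      rw [show (1/4:ℝ) = (1/2)^2 by norm_num, Real.sqrt_sq (by norm_num)]]
    exact Real.sqrt_le_sqrt (by linarith)
  · rw [hvn, hgoalX, Real.log_sqrt (by positivity)]
    obtain ⟨t, htdef⟩ : ∃ x : ℝ, x = u0^2 + u1^2 - 1 := ⟨_, rfl⟩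
    have h1t : u0^2 + u1^2 = 1 + t := by rw [htdef]; ring
    have hR : |t - 2*e*X*(ct^2-st^2)| ≤ C₄*ε := by
      rw [htdef, show u0^2+u1^2-1 - 2*e*X*(ct^2-st^2)
        = u0^2+u1^2 - (1 + 2*e*X*(ct^2-st^2)) by ring]
      exact hr2
    have ht_abs : |t| ≤ 1/2 := by
      have h1 := abs_le.mp hR
      have h2 := abs_le.mp h2eX4
      rw [abs_le]; constructor <;> linarith only [h1.1, h1.2, h2.1, h2.2, hC4e]
    have hlog2 : |Real.log (1+t) - t| ≤ 2*t^2 := by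
      have hlt : |(-t)| < 1 := by rw [abs_neg]; linarith [ht_abs]
      have h := Real.abs_log_sub_add_sum_range_le hlt 1
      rw [Finset.sum_range_one] at h
      norm_num at h
      rw [show Real.log (1+t) - t = -t + Real.log (1+t) by ring]
      refine h.trans ?_
      rw [div_le_iff₀ (by linarith [ht_abs])]
      nlinarith only [sq_abs t, abs_nonneg t, ht_abs, sq_nonneg t]
    obtain ⟨A, hAdef⟩ : ∃ x : ℝ, x = 2*e*X*(ct^2-st^2) := ⟨_, rfl⟩
    rw [← hAdef] at hR
    have hAb : |A| ≤ 2*e*Xm := by rw [hAdef]; exact h2eXbound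
    have hA2 : A^2 ≤ 4*(ε*Xm^2) := by
      nlinarith only [abs_le.mp hAb, he2m, mul_nonneg he0.le hXm0.le]
    have hR2 : (t - A)^2 ≤ C₄^2*ε := by
      nlinarith only [abs_le.mp hR, mul_nonneg (sq_nonneg C₄) hε.le, hε1,
        mul_nonneg hC₄0.le hε.le]
    have ht2 : t^2 ≤ (8*Xm^2 + 2*C₄^2)*ε := by
      nlinarith only [sq_nonneg (2*A - t), hA2, hR2]
    rw [h1t, show e*X*(ct^2-st^2) = A/2 by rw [hAdef]; ring]
    have h1 := abs_le.mp hlog2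
    have h2 := abs_le.mp hR
    rw [abs_le]
    constructor <;> linarith only [h1.1, h1.2, h2.1, h2.2, ht2, mul_nonneg hC₄0.le hε.le]



/-- Telescoping of the norm of the matrix product along Prüfer phases. -/
lemma telescope (vb : ℝ) (hvb : 0 < vb) (l : ℕ) (hl : 1 ≤ l)
    (v : ℕ → ℝ) (ε : ℝ) (hε : 0 < ε) (θ₀ : ℝ) (m : ℕ) :
    ∀ n, m ≤ n →
    (∀ j, m < j → j ≤ n →
      (Meps vb l ε * TmatR (v j) (El l - ε) * (Meps vb l ε)⁻¹).mulVec
        (eth (pruefer vb l ε v θ₀ (j-1))) ≠ 0) →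
    (Meps vb l ε * TprodR v (El l - ε) n m * (Meps vb l ε)⁻¹).mulVec
        (eth (pruefer vb l ε v θ₀ m))
      = (∏ j ∈ Finset.Icc (m+1) n,
          vnormR ((Meps vb l ε * TmatR (v j) (El l - ε) * (Meps vb l ε)⁻¹).mulVec
            (eth (pruefer vb l ε v θ₀ (j-1))))) • eth (pruefer vb l ε v θ₀ n) := by
  have hM := Meps_det vb hvb l hl ε hε
  intro n
  induction n with
  | zero =>
      intro hmn _
      have hm0 : m = 0 := Nat.le_zero.mp hmn
      subst hm0
      simp [TprodR, Matrix.mul_nonsing_inv _ hM, Matrix.one_mulVec]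
  | succ n ih =>
      intro hmn hne
      rcases Nat.lt_or_ge m (n+1) with hlt | hge
      · have hmn' : m ≤ n := Nat.lt_succ_iff.mp hlt
        have hprod : TprodR v (El l - ε) (n+1) m
            = TmatR (v (n+1)) (El l - ε) * TprodR v (El l - ε) n m := by
          rw [TprodR, TprodR, Nat.succ_sub hmn', List.range_succ_eq_map, List.map_cons,
            List.prod_cons, List.map_map]
          simp [Function.comp_def]
        have hBsplit : Meps vb l ε * TprodR v (El l - ε) (n+1) m * (Meps vb l ε)⁻¹
            = (Meps vb l ε * TmatR (v (n+1)) (El l - ε) * (Meps vb l ε)⁻¹)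
              * (Meps vb l ε * TprodR v (El l - ε) n m * (Meps vb l ε)⁻¹) := by
          rw [hprod]
          simp only [Matrix.mul_assoc, Matrix.nonsing_inv_mul_cancel_left _ _ hM]
        have ihs := ih hmn' (fun j h1 h2 => hne j h1 (Nat.le_succ_of_le h2))
        rw [hBsplit, ← Matrix.mulVec_mulVec, ihs, Matrix.mulVec_smul]
        have hkey := eth_SMap
          (Meps vb l ε * TmatR (v (n+1)) (El l - ε) * (Meps vb l ε)⁻¹)
          (pruefer vb l ε v θ₀ n)
          (by
            have := hne (n+1) hlt (le_refl _)
            simpa using this)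
        have hpr : pruefer vb l ε v θ₀ (n+1)
            = SMap (Meps vb l ε * TmatR (v (n+1)) (El l - ε) * (Meps vb l ε)⁻¹)
                (pruefer vb l ε v θ₀ n) := rfl
        rw [Finset.prod_Icc_succ_top (Nat.succ_le_succ hmn')]
        simp only [Nat.add_sub_cancel]
        conv_lhs => rw [hkey]
        rw [hpr, smul_smul]
      · have hm : m = n + 1 := le_antisymm hmn hge
        subst hm
        simp [TprodR, Matrix.mul_nonsing_inv _ hM, Matrix.one_mulVec]

/-- telescoped expansion of the logarithm of the modified transfer matrix product. -/
theorem stmt12 (K : Set ℝ) (hK : IsCompact K) (vb : ℝ) (hvb : 0 < vb)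
    (l : ℕ) (hl : 1 ≤ l) (hleven : Even l) :
    ∃ ε₀ > (0:ℝ), ∃ C : ℝ, ∀ v : ℕ → ℝ, (∀ j, v j ∈ K) → ∀ ε : ℝ, 0 < ε → ε ≤ ε₀ →
      ∀ θ₀ ∈ Set.Ico (0 : ℝ) (2 * π), ∀ m n : ℕ, m ≤ n →
        |Real.log (vnormR ((Meps vb l ε * TprodR v (El l - ε) n m * (Meps vb l ε)⁻¹).mulVec
              (eth (pruefer vb l ε v θ₀ m))))
            - Real.sqrt ε * ∑ j ∈ Finset.Icc (m + 1) n,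
                (-(((v j - vb) / (2 * Real.sqrt (2 * vb * El l))) *
                    Real.cos (2 * pruefer vb l ε v θ₀ (j - 1))))|
          ≤ C * ((n : ℝ) - (m : ℝ)) * ε := by
  -- bound on K
  obtain ⟨VK, hVK⟩ : ∃ VK : ℝ, 0 ≤ VK ∧ ∀ x ∈ K, |x| ≤ VK := by
    obtain ⟨r, hr⟩ := hK.isBounded.subset_closedBall 0
    exact ⟨max r 0, le_max_right _ _, fun x hx => by
      have := hr hx
      rw [Metric.mem_closedBall, Real.dist_eq, sub_zero] at this
      exact this.trans (le_max_left _ _)⟩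
  obtain ⟨ε₀, hε₀, C, hC0, hstep⟩ := step_est vb hvb l hl hleven VK hVK.1
  refine ⟨ε₀, hε₀, C, ?_⟩
  intro v hv ε hε hεε₀ θ₀ _ m n hmn
  set E := El l - ε
  set B : ℕ → Matrix (Fin 2) (Fin 2) ℝ :=
    fun j => Meps vb l ε * TmatR (v j) E * (Meps vb l ε)⁻¹ with hB
  set θ : ℕ → ℝ := pruefer vb l ε v θ₀ with hθ
  -- per-step facts
  have hstepj : ∀ j, 1 ≤ j →
      (1/2 : ℝ) ≤ vnormR ((B j).mulVec (eth (θ (j-1)))) ∧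
      |Real.log (vnormR ((B j).mulVec (eth (θ (j-1)))))
        - Real.sqrt ε * (-((v j - vb) / (2 * Real.sqrt (2 * vb * El l))
            * Real.cos (2 * θ (j-1))))| ≤ C * ε :=
    fun j _ => hstep (v j) (hVK.2 _ (hv j)) ε hε hεε₀ (θ (j-1))
  have hne : ∀ j, m < j → j ≤ n → (B j).mulVec (eth (θ (j-1))) ≠ 0 := by
    intro j h1 _ hzero
    have := (hstepj j (Nat.one_le_iff_ne_zero.mpr (by omega))).1
    rw [hzero] at this
    have : (1/2 : ℝ) ≤ 0 := by simpa [vnormR_eq] using this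
    norm_num at this
  have htel := telescope vb hvb l hl v ε hε θ₀ m n hmn hne
  rw [htel, vnormR_smul, vnormR_eth, mul_one]
  set R := ∏ j ∈ Finset.Icc (m+1) n, vnormR ((B j).mulVec (eth (θ (j-1)))) with hR
  have hpos : ∀ j ∈ Finset.Icc (m+1) n, (0:ℝ) < vnormR ((B j).mulVec (eth (θ (j-1)))) := by
    intro j hj
    rw [Finset.mem_Icc] at hj
    have := (hstepj j (by omega)).1
    linarith
  have hRpos : 0 < R := Finset.prod_pos hpos
  rw [abs_of_pos hRpos]
  rw [Real.log_prod (fun j hj => ne_of_gt (hpos j hj))]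
  rw [Finset.mul_sum, ← Finset.sum_sub_distrib]
  calc |∑ j ∈ Finset.Icc (m+1) n,
        (Real.log (vnormR ((B j).mulVec (eth (θ (j-1)))))
          - Real.sqrt ε * (-((v j - vb) / (2 * Real.sqrt (2 * vb * El l))
              * Real.cos (2 * θ (j-1)))))|
      ≤ ∑ j ∈ Finset.Icc (m+1) n,
          |Real.log (vnormR ((B j).mulVec (eth (θ (j-1)))))
            - Real.sqrt ε * (-((v j - vb) / (2 * Real.sqrt (2 * vb * El l))
                * Real.cos (2 * θ (j-1))))| := Finset.abs_sum_le_sum_abs _ _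
    _ ≤ ∑ j ∈ Finset.Icc (m+1) n, C * ε := by
        apply Finset.sum_le_sum
        intro j hj
        rw [Finset.mem_Icc] at hj
        exact (hstepj j (by omega)).2
    _ = C * ((n : ℝ) - (m : ℝ)) * ε := by
        rw [Finset.sum_const, Nat.card_Icc]
        have : (n + 1 - (m+1)) = n - m := by omega
        rw [this]
        have : ((n - m : ℕ) : ℝ) = (n : ℝ) - (m : ℝ) := by
          push_cast [hmn]
          ring
        rw [nsmul_eq_mul, this]
        ring

end
end
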